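/- arXiv:0704.2950 — 6 statements merged into one kernel-verified Lean document; each statement's English description precedes it below -/
import Mathlib

section
/- Let ψ : ℝⁿ → ℂ be supported in a cube Q̂ with ∫ ψ = 0 and ‖ψ‖₁ ≤ 1, let φ = |R|⁻¹ 1_R for a cube R, and let k be a kernel satisfying the Lipschitz smoothness condition |k(x,z) - k(x,c)| ≤ C |z-c|^γ / |x-c|^{n+γ} when |z-c| ≤ ½|x-c|. If the cube Q̂ has side length ℓ(Q̂) and center c, and y ∉ 3R where R, Q̂ are positioned so that |w-c| ≥ (1/3)|x-y| and |z-c| ≤ ℓ(Q̂) for all w ∈ R, z ∈ Q̂, then |∫∫ φ(w) k(w,z) ψ(z) dw dz| ≤ c_n C ℓ(Q̂)^γ / |x-y|^{n+γ}. -/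
open MeasureTheory

/-- Lemma 2.2(a), first estimate: let `ψ` be supported in a cube `Q̂` with center `cQ` and side
controlled by `ℓ`, with `∫ ψ = 0` and `∫ |ψ| ≤ 1`; let `φ = |R|⁻¹ 1_R`; let `k` be a kernel which
is `γ`-Lipschitz smooth in the second variable.  If `R` and `Q̂` are positioned so that
`|z - cQ| ≤ ½ |w - cQ|` and `(1/3)|x-y| ≤ |w - cQ|` for `w ∈ R`, `z ∈ supp ψ`, then
`|∫∫ φ(w) k(w,z) ψ(z) dw dz| ≤ c_n C ℓ^γ / |x-y|^{n+γ}`. -/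
theorem kernel_estimate_off_3Rx (n : ℕ) (γ : ℝ) (hγ0 : 0 < γ) (hγ1 : γ ≤ 1) :
    ∃ c : ℝ, 0 < c ∧
      ∀ (C : ℝ) (k : (Fin n → ℝ) → (Fin n → ℝ) → ℂ)
        (ψ : (Fin n → ℝ) → ℂ) (R : Set (Fin n → ℝ)) (x y cQ : Fin n → ℝ) (ℓ : ℝ),
        0 ≤ C → 0 < ℓ →
        MeasurableSet R → volume R ≠ 0 → volume R ≠ ⊤ →
        Integrable ψ →
        (∫ z, ψ z) = 0 →
        (∫ z, ‖ψ z‖) ≤ 1 →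
        (∀ z ∈ Function.support ψ, dist z cQ ≤ ℓ) →
        (∀ w ∈ R, ∀ z ∈ Function.support ψ, dist z cQ ≤ (1/2) * dist w cQ) →
        (∀ w ∈ R, (1/3) * dist x y ≤ dist w cQ) →
        (∀ w z : Fin n → ℝ, z ≠ cQ → dist z cQ ≤ (1/2) * dist w cQ →
          ‖k w z - k w cQ‖ ≤ C * dist z cQ ^ γ / dist w cQ ^ ((n : ℝ) + γ)) →
        0 < dist x y →
        ‖∫ w in R, (volume R).toReal⁻¹ • (∫ z, k w z * ψ z)‖
          ≤ c * C * ℓ ^ γ / dist x y ^ ((n : ℝ) + γ) := by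
  refine ⟨(3 : ℝ) ^ ((n : ℝ) + γ), Real.rpow_pos_of_pos (by norm_num) _, ?_⟩
  intro C k ψ R x y cQ ℓ hC hℓ hRm hR0 hRT hψi hψ0 hψ1 hsupp hhalf hthird hk hxy
  have hnγ : (0:ℝ) < (n : ℝ) + γ := by positivity
  have hdxy : (0:ℝ) < dist x y ^ ((n : ℝ) + γ) := Real.rpow_pos_of_pos hxy _
  set M : ℝ := C * ℓ ^ γ / ((1/3) * dist x y) ^ ((n : ℝ) + γ) with hM
  have hd3 : (0:ℝ) < (1/3) * dist x y := by linarith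
  have hd3p : (0:ℝ) < ((1/3) * dist x y) ^ ((n : ℝ) + γ) := Real.rpow_pos_of_pos hd3 _
  have hM0 : 0 ≤ M := by
    apply div_nonneg _ hd3p.le
    exact mul_nonneg hC (Real.rpow_nonneg hℓ.le _)
  -- the claimed bound equals 3^(n+γ) * C * ℓ^γ / dxy^(n+γ)
  have hMeq : M = (3:ℝ) ^ ((n : ℝ) + γ) * C * ℓ ^ γ / dist x y ^ ((n : ℝ) + γ) := by
    rw [hM, Real.mul_rpow (by norm_num) hxy.le]
    rw [show ((1:ℝ)/3) = (3:ℝ)⁻¹ by norm_num, Real.inv_rpow (by norm_num)]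
    have h3 : (0:ℝ) < (3:ℝ) ^ ((n : ℝ) + γ) := Real.rpow_pos_of_pos (by norm_num) _
    field_simp
  rw [← hMeq]
  -- inner bound
  have inner : ∀ w ∈ R, ‖∫ z, k w z * ψ z‖ ≤ M := by
    intro w hw
    by_cases hint : Integrable (fun z => k w z * ψ z)
    · have hconst : Integrable (fun z => k w cQ * ψ z) := hψi.const_mul _
      have key : (∫ z, k w z * ψ z) = ∫ z, (k w z - k w cQ) * ψ z := by
        have : (fun z => (k w z - k w cQ) * ψ z)
            = fun z => k w z * ψ z - k w cQ * ψ z := by ext z; ring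
        rw [this, integral_sub hint hconst, integral_const_mul, hψ0, mul_zero, sub_zero]
      rw [key]
      have hwcQ : (0:ℝ) < dist w cQ := lt_of_lt_of_le hd3 (hthird w hw)
      have hwp : (0:ℝ) < dist w cQ ^ ((n : ℝ) + γ) := Real.rpow_pos_of_pos hwcQ _
      have ptbd : ∀ z, ‖(k w z - k w cQ) * ψ z‖ ≤ M * ‖ψ z‖ := by
        intro z
        by_cases hz : ψ z = 0
        · simp [hz, mul_nonneg hM0]
        · have hzs : z ∈ Function.support ψ := hz
          have h1 : dist z cQ ≤ ℓ := hsupp z hzs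
          have h2 : dist z cQ ≤ (1/2) * dist w cQ := hhalf w hw z hzs
          rw [norm_mul]
          gcongr ?_ * _
          by_cases hzc : z = cQ
          · simp [hzc, hM0]
          · refine (hk w z hzc h2).trans ?_
            rw [hM]
            gcongr
            exact hthird w hw
      calc ‖∫ z, (k w z - k w cQ) * ψ z‖ ≤ ∫ z, M * ‖ψ z‖ := by
              refine norm_integral_le_of_norm_le ((hψi.norm).const_mul M)
                (Filter.Eventually.of_forall ptbd)
        _ = M * ∫ z, ‖ψ z‖ := integral_const_mul _ _
        _ ≤ M * 1 := by
              refine mul_le_mul_of_nonneg_left hψ1 hM0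
        _ = M := mul_one M
    · rw [integral_undef hint]; simpa using hM0
  -- outer bound
  have hvol : (0:ℝ) < (volume R).toReal := ENNReal.toReal_pos hR0 hRT
  have := norm_setIntegral_le_of_norm_le_const_ae'
    (f := fun w => (volume R).toReal⁻¹ • (∫ z, k w z * ψ z))
    (μ := volume) (C := (volume R).toReal⁻¹ * M) (lt_top_iff_ne_top.2 hRT)
    (Filter.Eventually.of_forall (fun w hw => by
      rw [norm_smul, Real.norm_eq_abs, abs_of_nonneg (inv_nonneg.2 hvol.le)]
      exact mul_le_mul_of_nonneg_left (inner w hw) (inv_nonneg.2 hvol.le)))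
  refine this.trans ?_
  rw [measureReal_def, mul_assoc, mul_comm M, ← mul_assoc, inv_mul_cancel₀ hvol.ne', one_mul]
end

section
/- Let (T_k)_{k ∈ ℤ} be a family of bounded operators on a Hilbert space H with only finitely many nonzero. Suppose there is a summable sequence (α_k)_{k∈ℤ} of nonnegative reals such that max(‖T_i* T_j‖, ‖T_i T_j*‖) ≤ α_{i-j}² for all i,j. Then ‖∑_k T_k‖ ≤ ∑_k α_k. -/
namespace CotlarStein

open ContinuousLinearMap

variable {H : Type*} [NormedAddCommGroup H] [InnerProductSpace ℂ H] [CompleteSpace H]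

/-- ordered product of `T i* * T j` over a list of pairs. -/
noncomputable def op (T : ℤ → H →L[ℂ] H) (l : List (ℤ × ℤ)) : H →L[ℂ] H :=
  (l.map fun p => star (T p.1) * T p.2).prod

/-- regrouped chain product. -/
noncomputable def gg (T : ℤ → H →L[ℂ] H) : (H →L[ℂ] H) → List (ℤ × ℤ) → (H →L[ℂ] H)
  | b, [] => b
  | b, q :: l => (b * star (T q.1)) * gg T (T q.2) l

def sw (α : ℤ → ℝ) : ℤ → List (ℤ × ℤ) → ℝ
  | _, [] => 1
  | j, q :: l => α (j - q.1) * sw α q.2 l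

def wA (α : ℤ → ℝ) (l : List (ℤ × ℤ)) : ℝ := (l.map fun p => α (p.1 - p.2)).prod

def W (α : ℤ → ℝ) (j : ℤ) (l : List (ℤ × ℤ)) : ℝ := sw α j l * wA α l

variable {α : ℤ → ℝ}

lemma sw_nonneg (hα0 : ∀ k, 0 ≤ α k) : ∀ (l : List (ℤ × ℤ)) (j : ℤ), 0 ≤ sw α j l
  | [], _ => zero_le_one
  | q :: l, j => mul_nonneg (hα0 _) (sw_nonneg hα0 l q.2)

lemma wA_nonneg (hα0 : ∀ k, 0 ≤ α k) : ∀ l : List (ℤ × ℤ), 0 ≤ wA α l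
  | [] => zero_le_one
  | q :: l => by
      simpa [wA, List.prod_cons] using mul_nonneg (hα0 _) (wA_nonneg hα0 l)

lemma W_nonneg (hα0 : ∀ k, 0 ≤ α k) (j : ℤ) (l : List (ℤ × ℤ)) : 0 ≤ W α j l :=
  mul_nonneg (sw_nonneg hα0 l j) (wA_nonneg hα0 l)

lemma W_cons (j : ℤ) (q : ℤ × ℤ) (l : List (ℤ × ℤ)) :
    W α j (q :: l) = α (j - q.1) * (α (q.1 - q.2) * W α q.2 l) := by
  simp only [W, sw, wA, List.map_cons, List.prod_cons]; ring

section PerTerm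

variable {T : ℤ → H →L[ℂ] H}

lemma op_cons (T : ℤ → H →L[ℂ] H) (p : ℤ × ℤ) (l : List (ℤ × ℤ)) :
    op T (p :: l) = (star (T p.1) * T p.2) * op T l := by
  simp [op, List.prod_cons]

variable (hα0 : ∀ k, 0 ≤ α k)
  (hc1 : ∀ i j, ‖star (T i) * T j‖ ≤ α (i - j) ^ 2)
  (hc2 : ∀ i j, ‖T i * star (T j)‖ ≤ α (i - j) ^ 2)
  (hT : ∀ k, ‖T k‖ ≤ α 0)

include hα0 hc1 in
lemma boundA (l : List (ℤ × ℤ)) : ∀ p : ℤ × ℤ,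
    ‖op T (p :: l)‖ ≤ α (p.1 - p.2) ^ 2 * (wA α l) ^ 2 := by
  induction l with
  | nil => intro p; simpa [op, wA] using hc1 p.1 p.2
  | cons q l ih =>
      intro p
      calc ‖op T (p :: q :: l)‖ ≤ ‖star (T p.1) * T p.2‖ * ‖op T (q :: l)‖ := by
            rw [op_cons]; exact norm_mul_le _ _
        _ ≤ α (p.1 - p.2) ^ 2 * (α (q.1 - q.2) ^ 2 * (wA α l) ^ 2) := by
            apply mul_le_mul (hc1 p.1 p.2) (ih q) (norm_nonneg _)
            positivity
        _ = α (p.1 - p.2) ^ 2 * (wA α (q :: l)) ^ 2 := by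
            simp only [wA, List.map_cons, List.prod_cons]; ring

lemma g_spec (l : List (ℤ × ℤ)) : ∀ p : ℤ × ℤ,
    op T (p :: l) = star (T p.1) * gg T (T p.2) l := by
  induction l with
  | nil => intro p; simp [op, gg]
  | cons q l ih =>
      intro p
      rw [op_cons, ih q, gg]
      simp [mul_assoc]

include hα0 hc2 hT in
lemma boundg (l : List (ℤ × ℤ)) : ∀ j : ℤ, ‖gg T (T j) l‖ ≤ α 0 * (sw α j l) ^ 2 := by
  induction l with
  | nil => intro j; simpa [gg, sw] using hT j
  | cons q l ih =>
      intro j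
      calc ‖gg T (T j) (q :: l)‖ ≤ ‖T j * star (T q.1)‖ * ‖gg T (T q.2) l‖ :=
            norm_mul_le _ _
        _ ≤ α (j - q.1) ^ 2 * (α 0 * (sw α q.2 l) ^ 2) := by
            apply mul_le_mul (hc2 j q.1) (ih q.2) (norm_nonneg _)
            positivity
        _ = α 0 * (sw α j (q :: l)) ^ 2 := by
            simp only [sw]; ring

include hα0 hc1 hc2 hT in
lemma perTerm (p : ℤ × ℤ) (l : List (ℤ × ℤ)) :
    ‖op T (p :: l)‖ ≤ α 0 * (α (p.1 - p.2) * W α p.2 l) := by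
  have hA := boundA hα0 hc1 l p
  have hB : ‖op T (p :: l)‖ ≤ α 0 * (α 0 * (sw α p.2 l) ^ 2) := by
    rw [g_spec]
    calc ‖star (T p.1) * gg T (T p.2) l‖ ≤ ‖star (T p.1)‖ * ‖gg T (T p.2) l‖ :=
          norm_mul_le _ _
      _ ≤ α 0 * (α 0 * (sw α p.2 l) ^ 2) := by
          rw [norm_star]
          exact mul_le_mul (hT p.1) (boundg hα0 hc2 hT l p.2) (norm_nonneg _) (hα0 0)
  have hrhs : 0 ≤ α 0 * (α (p.1 - p.2) * W α p.2 l) := by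
    have := W_nonneg hα0 p.2 l; have := hα0 0; have := hα0 (p.1 - p.2); positivity
  have hsq : ‖op T (p :: l)‖ ^ 2 ≤ (α 0 * (α (p.1 - p.2) * W α p.2 l)) ^ 2 := by
    calc ‖op T (p :: l)‖ ^ 2 = ‖op T (p :: l)‖ * ‖op T (p :: l)‖ := sq ..
      _ ≤ (α (p.1 - p.2) ^ 2 * (wA α l) ^ 2) * (α 0 * (α 0 * (sw α p.2 l) ^ 2)) :=
          mul_le_mul hA hB (norm_nonneg _) (by positivity)
      _ = (α 0 * (α (p.1 - p.2) * W α p.2 l)) ^ 2 := by rw [W]; ring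
  exact (pow_le_pow_iff_left₀ (norm_nonneg _) hrhs two_ne_zero).mp hsq

end PerTerm

/-- reindexing sums over `piFinset` for `Fin (n+1)`. -/
lemma pi_succ_sum {β M : Type*} [AddCommMonoid M] (s : Finset β) (n : ℕ)
    (φ : (Fin (n+1) → β) → M) :
    ∑ f ∈ Fintype.piFinset (fun _ : Fin (n+1) => s), φ f
      = ∑ p ∈ s, ∑ f ∈ Fintype.piFinset (fun _ : Fin n => s), φ (Fin.cons p f) := by
  rw [← Finset.sum_product']
  refine Finset.sum_nbij' (fun f => (f 0, Fin.tail f)) (fun pf => Fin.cons pf.1 pf.2) ?_ ?_ ?_ ?_ ?_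
  · intro f hf; simp [Fintype.mem_piFinset] at hf ⊢; exact ⟨hf 0, fun i => hf _⟩
  · intro pf hpf; simp [Fintype.mem_piFinset] at hpf ⊢
    intro i; refine Fin.cases ?_ ?_ i <;> simp [hpf.1, hpf.2]
  · intro f _; simp [Fin.cons_self_tail]
  · intro pf _; simp
  · intro f _; simp [Fin.cons_self_tail]

/-- expansion of a power of a finite sum in a (noncommutative) ring. -/
lemma sum_pow_eq {R β : Type*} [Ring R] [DecidableEq β] (s : Finset β) (g : β → R) :
    ∀ n : ℕ, (∑ p ∈ s, g p) ^ n
      = ∑ f ∈ Fintype.piFinset (fun _ : Fin n => s), (List.ofFn fun i => g (f i)).prod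
  | 0 => by
      rw [pow_zero]
      have h1 : ∀ f ∈ Fintype.piFinset (fun _ : Fin 0 => s),
          (List.ofFn fun i : Fin 0 => g (f i)).prod = 1 := by
        intro f _; simp
      rw [Finset.sum_congr rfl h1, Finset.sum_const, Fintype.card_piFinset]
      simp
  | n + 1 => by
      rw [pow_succ', sum_pow_eq s g n, pi_succ_sum, Finset.mul_sum]
      rw [Finset.sum_congr rfl fun f _ => Finset.sum_mul s g _]
      rw [Finset.sum_comm]
      refine Finset.sum_congr rfl fun p _ => Finset.sum_congr rfl fun f _ => ?_
      simp [List.ofFn_succ, List.prod_cons]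

section Sums

variable {α : ℤ → ℝ}

lemma shift_sum_le (hα0 : ∀ k, 0 ≤ α k) (hα : Summable α) (s : Finset ℤ) (j : ℤ) :
    ∑ i ∈ s, α (j - i) ≤ ∑' k, α k := by
  classical
  have h : ∑ i ∈ s.image (fun i => j - i), α i = ∑ i ∈ s, α (j - i) :=
    Finset.sum_image (by intro a _ b _ h; exact sub_right_injective h)
  rw [← h]
  exact hα.sum_le_tsum _ (fun k _ => hα0 k)

lemma sum_W_le (hα0 : ∀ k, 0 ≤ α k) (hα : Summable α) (F : Finset ℤ) :
    ∀ (n : ℕ) (j : ℤ),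
      ∑ f ∈ Fintype.piFinset (fun _ : Fin n => F ×ˢ F), W α j (List.ofFn f)
        ≤ (∑' k, α k) ^ (2 * n) := by
  intro n
  induction n with
  | zero =>
      intro j
      have h1 : ∀ f ∈ Fintype.piFinset (fun _ : Fin 0 => F ×ˢ F),
          W α j (List.ofFn f) = 1 := by
        intro f _; simp [W, sw, wA]
      rw [Finset.sum_congr rfl h1, Finset.sum_const, Fintype.card_piFinset]
      simp
  | succ n ih =>
      intro j
      have hA0 : 0 ≤ ∑' k, α k := tsum_nonneg hα0
      have hApow : (0:ℝ) ≤ (∑' k, α k) ^ (2*n) := pow_nonneg hA0 _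
      rw [pi_succ_sum]
      have step1 : ∀ p ∈ F ×ˢ F,
          ∑ f ∈ Fintype.piFinset (fun _ : Fin n => F ×ˢ F), W α j (List.ofFn (Fin.cons p f))
            ≤ α (j - p.1) * (α (p.1 - p.2) * (∑' k, α k) ^ (2*n)) := by
        intro p _
        have h1 : ∀ f ∈ Fintype.piFinset (fun _ : Fin n => F ×ˢ F),
            W α j (List.ofFn (Fin.cons p f))
              = α (j - p.1) * (α (p.1 - p.2) * W α p.2 (List.ofFn f)) := by
          intro f _
          have h2 : List.ofFn (Fin.cons p f) = p :: List.ofFn f := by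
            simp [List.ofFn_succ]
          rw [h2, W_cons]
        rw [Finset.sum_congr rfl h1, ← Finset.mul_sum, ← Finset.mul_sum]
        exact mul_le_mul_of_nonneg_left
          (mul_le_mul_of_nonneg_left (ih p.2) (hα0 _)) (hα0 _)
      calc ∑ p ∈ F ×ˢ F, ∑ f ∈ Fintype.piFinset (fun _ : Fin n => F ×ˢ F),
              W α j (List.ofFn (Fin.cons p f))
          ≤ ∑ p ∈ F ×ˢ F, α (j - p.1) * (α (p.1 - p.2) * (∑' k, α k) ^ (2*n)) :=
            Finset.sum_le_sum step1
        _ = ∑ i ∈ F, ∑ i' ∈ F, α (j - i) * (α (i - i') * (∑' k, α k) ^ (2*n)) :=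
            Finset.sum_product _ _ _
        _ ≤ ∑ i ∈ F, α (j - i) * ((∑' k, α k) * (∑' k, α k) ^ (2*n)) := by
            apply Finset.sum_le_sum
            intro i _
            rw [← Finset.mul_sum, ← Finset.sum_mul]
            exact mul_le_mul_of_nonneg_left
              (mul_le_mul_of_nonneg_right (shift_sum_le hα0 hα F i) hApow) (hα0 _)
        _ ≤ (∑' k, α k) * ((∑' k, α k) * (∑' k, α k) ^ (2*n)) := by
            rw [← Finset.sum_mul]
            exact mul_le_mul_of_nonneg_right (shift_sum_le hα0 hα F j) (by positivity)
        _ = (∑' k, α k) ^ (2 * (n+1)) := by ring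

end Sums

section Main

variable {T : ℤ → H →L[ℂ] H} {α : ℤ → ℝ}

lemma main_est (hα0 : ∀ k, 0 ≤ α k) (hα : Summable α)
    (hc1 : ∀ i j, ‖star (T i) * T j‖ ≤ α (i - j) ^ 2)
    (hc2 : ∀ i j, ‖T i * star (T j)‖ ≤ α (i - j) ^ 2)
    (hT : ∀ k, ‖T k‖ ≤ α 0) (F : Finset ℤ) (m : ℕ) :
    ‖(∑ p ∈ F ×ˢ F, star (T p.1) * T p.2) ^ (m+1)‖
      ≤ (α 0 * F.card) * (∑' k, α k) ^ (2*m+1) := by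
  classical
  have hA0 : 0 ≤ ∑' k, α k := tsum_nonneg hα0
  rw [sum_pow_eq]
  calc ‖∑ f ∈ Fintype.piFinset (fun _ : Fin (m+1) => F ×ˢ F),
          (List.ofFn fun i => star (T (f i).1) * T (f i).2).prod‖
      ≤ ∑ f ∈ Fintype.piFinset (fun _ : Fin (m+1) => F ×ˢ F), ‖op T (List.ofFn f)‖ := by
        refine (norm_sum_le _ _).trans_eq ?_
        refine Finset.sum_congr rfl fun f _ => ?_
        simp [op, List.map_ofFn, Function.comp_def]
    _ = ∑ p ∈ F ×ˢ F, ∑ f ∈ Fintype.piFinset (fun _ : Fin m => F ×ˢ F),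
          ‖op T (p :: List.ofFn f)‖ := by
        rw [pi_succ_sum]
        refine Finset.sum_congr rfl fun p _ => Finset.sum_congr rfl fun f _ => ?_
        congr 1
        simp [List.ofFn_succ]
    _ ≤ ∑ p ∈ F ×ˢ F, ∑ f ∈ Fintype.piFinset (fun _ : Fin m => F ×ˢ F),
          α 0 * (α (p.1 - p.2) * W α p.2 (List.ofFn f)) :=
        Finset.sum_le_sum fun p _ => Finset.sum_le_sum fun f _ =>
          perTerm hα0 hc1 hc2 hT p (List.ofFn f)
    _ = ∑ p ∈ F ×ˢ F, α 0 * (α (p.1 - p.2) *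
          ∑ f ∈ Fintype.piFinset (fun _ : Fin m => F ×ˢ F), W α p.2 (List.ofFn f)) := by
        refine Finset.sum_congr rfl fun p _ => ?_
        rw [← Finset.mul_sum, ← Finset.mul_sum]
    _ ≤ ∑ p ∈ F ×ˢ F, α 0 * (α (p.1 - p.2) * (∑' k, α k) ^ (2*m)) :=
        Finset.sum_le_sum fun p _ => mul_le_mul_of_nonneg_left
          (mul_le_mul_of_nonneg_left (sum_W_le hα0 hα F m p.2) (hα0 _)) (hα0 0)
    _ = (α 0 * (∑' k, α k) ^ (2*m)) * ∑ p ∈ F ×ˢ F, α (p.1 - p.2) := by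
        rw [Finset.mul_sum]
        refine Finset.sum_congr rfl fun p _ => by ring
    _ ≤ (α 0 * (∑' k, α k) ^ (2*m)) * (F.card * ∑' k, α k) := by
        refine mul_le_mul_of_nonneg_left ?_ (mul_nonneg (hα0 0) (pow_nonneg hA0 _))
        rw [Finset.sum_product]
        calc ∑ i ∈ F, ∑ i' ∈ F, α (i - i') ≤ ∑ _i ∈ F, ∑' k, α k :=
              Finset.sum_le_sum fun i _ => shift_sum_le hα0 hα F i
          _ = F.card * ∑' k, α k := by rw [Finset.sum_const, nsmul_eq_mul]
    _ = (α 0 * F.card) * (∑' k, α k) ^ (2*m+1) := by ring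

end Main

end CotlarStein

/-- Cotlar–Stein almost orthogonality lemma: if `(T_k)_{k ∈ ℤ}` is a family of bounded operators
on a Hilbert space, with only finitely many nonzero, and if there is a summable sequence
`(α_k)` of nonnegative reals with `max ‖T_i* T_j‖ ‖T_i T_j*‖ ≤ α_{i-j}²` for all `i, j`, then
`‖∑ k, T_k‖ ≤ ∑ k, α_k`. -/
theorem cotlar_lemma {H : Type*} [NormedAddCommGroup H] [InnerProductSpace ℂ H] [CompleteSpace H]
    (T : ℤ → H →L[ℂ] H) (hfin : (Function.support T).Finite)
    (α : ℤ → ℝ) (hα0 : ∀ k, 0 ≤ α k) (hα : Summable α)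
    (hcotlar : ∀ i j : ℤ,
      max ‖ContinuousLinearMap.adjoint (T i) ∘L T j‖
          ‖T i ∘L ContinuousLinearMap.adjoint (T j)‖ ≤ (α (i - j)) ^ 2) :
    ‖∑ᶠ k, T k‖ ≤ ∑' k, α k := by
  classical
  have hA0 : 0 ≤ ∑' k, α k := tsum_nonneg hα0
  set F : Finset ℤ := hfin.toFinset with hF
  rw [finsum_eq_sum T hfin]
  set S : H →L[ℂ] H := ∑ k ∈ F, T k with hSdef
  set A : ℝ := ∑' k, α k with hAdef
  -- translate the hypotheses
  have hc1 : ∀ i j, ‖star (T i) * T j‖ ≤ α (i - j) ^ 2 := by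
    intro i j
    rw [ContinuousLinearMap.star_eq_adjoint, ContinuousLinearMap.mul_def]
    exact le_trans (le_max_left _ _) (hcotlar i j)
  have hc2 : ∀ i j, ‖T i * star (T j)‖ ≤ α (i - j) ^ 2 := by
    intro i j
    rw [ContinuousLinearMap.star_eq_adjoint, ContinuousLinearMap.mul_def]
    exact le_trans (le_max_right _ _) (hcotlar i j)
  have hT : ∀ k, ‖T k‖ ≤ α 0 := by
    intro k
    have h := le_trans (le_max_left _ _) (hcotlar k k)
    rw [sub_self, ContinuousLinearMap.norm_adjoint_comp_self] at h
    have h2 : ‖T k‖ ^ 2 ≤ α 0 ^ 2 := by rwa [sq]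
    exact (pow_le_pow_iff_left₀ (norm_nonneg _) (hα0 0) two_ne_zero).mp h2
  -- expansion of star S * S
  have hexp : star S * S = ∑ p ∈ F ×ˢ F, star (T p.1) * T p.2 := by
    rw [hSdef, star_sum, Finset.sum_mul_sum F F (fun i => star (T i)) T]
    exact (Finset.sum_product F F (fun p => star (T p.1) * T p.2)).symm
  -- key estimate
  have key : ∀ m : ℕ, ‖(star S * S) ^ (m+1)‖ ≤ (α 0 * F.card) * A ^ (2*m+1) := by
    intro m
    rw [hexp]
    exact CotlarStein.main_est hα0 hα hc1 hc2 hT F m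
  -- norms of powers of the self-adjoint star S * S
  have hsa : IsSelfAdjoint (star S * S) := by
    rw [IsSelfAdjoint, star_mul, star_star]
  have hnorm_pow : ∀ M : ℕ, ‖(star S * S) ^ (2^M)‖ = ‖S‖ ^ (2 * 2^M) := by
    intro M
    have h1 := congrArg (fun x : NNReal => (x : ℝ)) (hsa.nnnorm_pow_two_pow M)
    push_cast at h1
    calc ‖(star S * S) ^ (2^M)‖ = ‖star S * S‖ ^ (2^M) := h1
      _ = (‖S‖ * ‖S‖) ^ (2^M) := by rw [CStarRing.norm_star_mul_self]
      _ = ‖S‖ ^ (2 * 2^M) := by rw [← sq, ← pow_mul]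
  have key2 : ∀ M : ℕ, ‖S‖ ^ (2 * 2^M) ≤ (α 0 * F.card) * A ^ (2*(2^M - 1)+1) := by
    intro M
    rw [← hnorm_pow M]
    have hm : (2^M - 1) + 1 = 2^M := Nat.sub_add_cancel (Nat.one_le_two_pow)
    have := key (2^M - 1)
    rwa [hm] at this
  -- conclude
  rcases eq_or_lt_of_le hA0 with hA | hApos
  · -- A = 0
    have h := key2 0
    have e : (2 : ℕ) * 2^0 = 2 := by norm_num
    have e2 : 2 * (2^0 - 1) + 1 = 1 := by norm_num
    rw [e, e2, ← hA] at h
    simp only [pow_one, mul_zero] at h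
    have hS0 : ‖S‖ = 0 := le_antisymm (by nlinarith [norm_nonneg S]) (norm_nonneg S)
    rw [hS0, ← hA]
  · by_contra hlt
    push_neg at hlt
    set r : ℝ := ‖S‖ / A with hr
    have hr1 : 1 < r := (one_lt_div hApos).mpr hlt
    obtain ⟨k, hk⟩ := pow_unbounded_of_one_lt ((α 0 * F.card) / A) hr1
    have hM : k ≤ 2 * 2^k := le_trans (Nat.lt_two_pow_self (n := k)).le (Nat.le_mul_of_pos_left _ two_pos)
    have h1 : r ^ (2 * 2^k) ≤ (α 0 * F.card) / A := by
      have hkey := key2 k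
      set m : ℕ := 2^k - 1 with hmdef
      have hm : m + 1 = 2^k := Nat.sub_add_cancel (Nat.one_le_two_pow)
      have hexp2 : 2 * 2^k = (2*m+1) + 1 := by omega
      rw [hr, div_pow, div_le_div_iff₀ (pow_pos hApos _) hApos]
      calc ‖S‖ ^ (2 * 2^k) * A ≤ ((α 0 * F.card) * A ^ (2*m+1)) * A :=
            mul_le_mul_of_nonneg_right hkey hA0
        _ = (α 0 * F.card) * A ^ (2 * 2^k) := by rw [hexp2, pow_succ]; ring
    have h2 : r ^ k ≤ r ^ (2 * 2^k) := pow_le_pow_right₀ hr1.le hM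
    linarith [hk.trans_le (h2.trans h1)]
end

section
/- Let Ψ : ℝ → ℂ satisfy |Ψ(x)| ≤ C min{1, |x|⁻²} for all x, and set Ψ_k(x) = 2^k Ψ(2^k x) for k ∈ ℤ. Then (∑_{k∈ℤ} |Ψ_k(x)|²)^{1/2} ≤ c·C / |x| for all x ≠ 0, where c is an absolute constant. -/
lemma aux_base_summable : Summable (fun k : ℤ => ((1:ℝ)/4) ^ k.natAbs) := by
  apply Summable.of_nat_of_neg <;>
  · refine Summable.congr (summable_geometric_of_lt_one (r := (1:ℝ)/4)
      (by norm_num) (by norm_num)) fun n => by simp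

lemma aux_base_tsum_le : (∑' k : ℤ, ((1:ℝ)/4) ^ k.natAbs) ≤ 2 := by
  have h1 : Summable (fun n : ℕ => ((1:ℝ)/4) ^ n) :=
    summable_geometric_of_lt_one (by norm_num) (by norm_num)
  have e1 : (fun n : ℕ => ((1:ℝ)/4) ^ ((n:ℤ)).natAbs) = (fun n : ℕ => ((1:ℝ)/4) ^ n) := by
    funext n; simp
  have e2 : (fun n : ℕ => ((1:ℝ)/4) ^ ((-(n:ℤ))).natAbs) = (fun n : ℕ => ((1:ℝ)/4) ^ n) := by
    funext n; simp
  rw [Summable.tsum_of_nat_of_neg (f := fun k : ℤ => ((1:ℝ)/4) ^ k.natAbs) (by rw [e1]; exact h1)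
    (by rw [e2]; exact h1)]
  rw [e1, e2]
  have hg : (∑' n : ℕ, ((1:ℝ)/4) ^ n) = (1 - 1/4)⁻¹ :=
    tsum_geometric_of_lt_one (by norm_num) (by norm_num)
  rw [hg]
  norm_num

/-- Size estimate for the square function of a Littlewood–Paley family: if
`|Ψ(x)| ≤ C·min{1, |x|⁻²}` and `Ψ_k(x) = 2^k Ψ(2^k x)`, then
`(∑_{k∈ℤ} |Ψ_k(x)|²)^{1/2} ≤ c·C/|x|` for all `x ≠ 0`, with `c` an absolute constant. -/
theorem squarefunction_size_estimate :
    ∃ c : ℝ, 0 < c ∧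
      ∀ (Ψ : ℝ → ℂ) (C : ℝ),
        (∀ x : ℝ, ‖Ψ x‖ ≤ C * min 1 (|x| ^ 2)⁻¹) →
        ∀ x : ℝ, x ≠ 0 →
          (∑' k : ℤ, ((2 : ℝ) ^ k * ‖Ψ ((2 : ℝ) ^ k * x)‖) ^ 2) ^ ((1 : ℝ)/2)
            ≤ c * C / |x| := by
  refine ⟨3, by norm_num, ?_⟩
  intro Ψ C h x hx
  have hC : 0 ≤ C := le_trans (norm_nonneg (Ψ 1)) (by simpa using h 1)
  set a := |x| with ha_def
  have ha : 0 < a := abs_pos.mpr hx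
  set n : ℤ := Int.log 2 a with hn_def
  have h1 : (2:ℝ) ^ n ≤ a := by
    have := Int.zpow_log_le_self (b := 2) (R := ℝ) (by norm_num) ha
    simpa using this
  have h2 : a < (2:ℝ) ^ (n + 1) := by
    have := Int.lt_zpow_succ_log_self (b := 2) (R := ℝ) (by norm_num) a
    simpa using this
  have hpow2 : ∀ m : ℤ, ((2:ℝ) ^ m) ^ 2 = (4:ℝ) ^ m := by
    intro m
    rw [← zpow_natCast ((2:ℝ) ^ m) 2, ← zpow_mul]
    norm_num
    rw [show (4:ℝ) = (2:ℝ)^(2:ℤ) by norm_num, ← zpow_mul, mul_comm]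
  have ha2 : (0:ℝ) < a ^ 2 := by positivity
  have key : ∀ k : ℤ, ((2:ℝ) ^ k * ‖Ψ ((2:ℝ) ^ k * x)‖) ^ 2
      ≤ (4 * C^2 / a^2) * ((1:ℝ)/4) ^ (k + n).natAbs := by
    intro k
    have h2k : (0:ℝ) < (2:ℝ) ^ k := zpow_pos (by norm_num) k
    have h4k : (0:ℝ) < (4:ℝ) ^ k := zpow_pos (by norm_num) k
    have h4n : (0:ℝ) < (4:ℝ) ^ n := zpow_pos (by norm_num) n
    have habs : |(2:ℝ) ^ k * x| = (2:ℝ) ^ k * a := by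
      rw [abs_mul, abs_of_pos h2k]
    have hb := h ((2:ℝ) ^ k * x)
    rw [habs] at hb
    have hmin_nonneg : (0:ℝ) ≤ min 1 (((2:ℝ)^k * a) ^ 2)⁻¹ := by positivity
    have step1 : ((2:ℝ) ^ k * ‖Ψ ((2:ℝ) ^ k * x)‖) ^ 2
        ≤ ((2:ℝ)^k) ^ 2 * (C * min 1 (((2:ℝ)^k * a) ^ 2)⁻¹) ^ 2 := by
      rw [← mul_pow]
      apply pow_le_pow_left₀ (by positivity)
      exact mul_le_mul_of_nonneg_left hb h2k.le
    refine step1.trans ?_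
    rw [hpow2 k]
    have hupper : a ^ 2 < 4 * (4:ℝ) ^ n := by
      have := pow_lt_pow_left₀ h2 ha.le two_ne_zero
      rwa [hpow2 (n+1), zpow_add₀ (by norm_num : (4:ℝ) ≠ 0), zpow_one, mul_comm] at this
    have hlower : (4:ℝ) ^ n ≤ a ^ 2 := by
      have := pow_le_pow_left₀ (by positivity) h1 2
      rwa [hpow2 n] at this
    rcases le_or_gt (k + n) 0 with hm | hm
    · have hm2 : (min 1 (((2:ℝ)^k * a) ^ 2)⁻¹) ^ 2 ≤ 1 :=
        pow_le_one₀ hmin_nonneg (min_le_left _ _)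
      have hmb : (C * min 1 (((2:ℝ)^k * a) ^ 2)⁻¹) ^ 2 ≤ C ^ 2 := by
        rw [mul_pow]
        nlinarith [sq_nonneg C]
      have hna : ((1:ℝ)/4) ^ (k+n).natAbs = (4:ℝ) ^ (k+n) := by
        rw [one_div, inv_pow, ← zpow_natCast, Int.ofNat_natAbs_of_nonpos hm, zpow_neg, inv_inv]
      rw [hna, zpow_add₀ (by norm_num : (4:ℝ) ≠ 0)]
      have final := mul_le_mul_of_nonneg_left hupper.le (mul_nonneg (sq_nonneg C) h4k.le)
      calc (4:ℝ)^k * (C * min 1 (((2:ℝ)^k * a) ^ 2)⁻¹) ^ 2 ≤ (4:ℝ)^k * C^2 :=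
            mul_le_mul_of_nonneg_left hmb h4k.le
        _ ≤ 4 * C ^ 2 / a ^ 2 * ((4:ℝ) ^ k * 4 ^ n) := by
            rw [div_mul_eq_mul_div, le_div_iff₀ ha2]
            nlinarith [final]
    · have hmb : (C * min 1 (((2:ℝ)^k * a) ^ 2)⁻¹) ^ 2
          ≤ C ^ 2 * ((((2:ℝ)^k * a) ^ 2)⁻¹) ^ 2 := by
        rw [mul_pow]
        exact mul_le_mul_of_nonneg_left
          (pow_le_pow_left₀ hmin_nonneg (min_le_right _ _) 2) (sq_nonneg C)
      have hna : ((1:ℝ)/4) ^ (k+n).natAbs = ((4:ℝ) ^ (k+n))⁻¹ := by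
        rw [one_div, inv_pow, ← zpow_natCast, Int.natAbs_of_nonneg hm.le]
      rw [hna, zpow_add₀ (by norm_num : (4:ℝ) ≠ 0)]
      have hpos1 : (0:ℝ) < (((2:ℝ)^k * a) ^ 2) ^ 2 := by positivity
      have hpos2 : (0:ℝ) < a^2 * ((4:ℝ)^k * (4:ℝ)^n) := by positivity
      have eL : (4:ℝ)^k * (C ^ 2 * ((((2:ℝ)^k * a) ^ 2)⁻¹) ^ 2)
          = ((4:ℝ)^k * C^2) / ((((2:ℝ)^k * a) ^ 2) ^ 2) := by
        rw [div_eq_mul_inv, inv_pow]; ring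
      have eR : 4 * C ^ 2 / a ^ 2 * ((4:ℝ)^k * (4:ℝ)^n)⁻¹
          = (4 * C^2) / (a^2 * ((4:ℝ)^k * (4:ℝ)^n)) := by
        field_simp
      calc (4:ℝ)^k * (C * min 1 (((2:ℝ)^k * a) ^ 2)⁻¹) ^ 2
          ≤ (4:ℝ)^k * (C ^ 2 * ((((2:ℝ)^k * a) ^ 2)⁻¹) ^ 2) :=
            mul_le_mul_of_nonneg_left hmb h4k.le
        _ ≤ 4 * C ^ 2 / a ^ 2 * ((4:ℝ)^k * (4:ℝ)^n)⁻¹ := by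
            rw [eL, eR, div_le_div_iff₀ hpos1 hpos2]
            have e3 : (((2:ℝ)^k * a) ^ 2) ^ 2 = ((4:ℝ)^k * a^2)^2 := by
              rw [mul_pow, hpow2 k]
            rw [e3]
            have key2 := mul_le_mul_of_nonneg_right hlower ha2.le
            nlinarith [mul_le_mul_of_nonneg_left key2
              (mul_nonneg (sq_nonneg C) (mul_pos h4k h4k).le), sq_nonneg C,
              mul_pos h4k h4k, mul_nonneg (mul_nonneg (sq_nonneg C) (mul_pos h4k h4k).le)
                (mul_nonneg ha2.le ha2.le)]
  -- summability of the majorant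
  have hshift : Summable (fun k : ℤ => ((1:ℝ)/4) ^ (k + n).natAbs) :=
    ((Equiv.addRight n).summable_iff (f := fun m : ℤ => ((1:ℝ)/4) ^ m.natAbs)).2
      aux_base_summable
  have hg_sum : Summable (fun k : ℤ => (4 * C^2 / a^2) * ((1:ℝ)/4) ^ (k + n).natAbs) :=
    hshift.mul_left _
  have hterm_sum : Summable (fun k : ℤ => ((2:ℝ) ^ k * ‖Ψ ((2:ℝ) ^ k * x)‖) ^ 2) :=
    Summable.of_nonneg_of_le (fun k => sq_nonneg _) key hg_sum
  have htsum : (∑' k : ℤ, ((2:ℝ) ^ k * ‖Ψ ((2:ℝ) ^ k * x)‖) ^ 2) ≤ (4 * C^2 / a^2) * 2 := by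
    calc (∑' k : ℤ, ((2:ℝ) ^ k * ‖Ψ ((2:ℝ) ^ k * x)‖) ^ 2)
        ≤ ∑' k : ℤ, (4 * C^2 / a^2) * ((1:ℝ)/4) ^ (k + n).natAbs :=
          Summable.tsum_le_tsum key hterm_sum hg_sum
      _ = (4 * C^2 / a^2) * ∑' k : ℤ, ((1:ℝ)/4) ^ (k + n).natAbs := tsum_mul_left
      _ ≤ (4 * C^2 / a^2) * 2 := by
          apply mul_le_mul_of_nonneg_left _ (by positivity)
          have e := (Equiv.addRight n).tsum_eq (fun m : ℤ => ((1:ℝ)/4) ^ m.natAbs)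
          simp only [Equiv.coe_addRight] at e
          rw [e]
          exact aux_base_tsum_le
  have hT0 : (0:ℝ) ≤ ∑' k : ℤ, ((2:ℝ) ^ k * ‖Ψ ((2:ℝ) ^ k * x)‖) ^ 2 :=
    tsum_nonneg fun k => sq_nonneg _
  have hsq : (4 * C^2 / a^2) * 2 ≤ (3 * C / a) ^ 2 := by
    rw [div_pow, mul_pow]
    rw [div_mul_eq_mul_div, div_le_div_iff₀ ha2 ha2]
    nlinarith [sq_nonneg C, ha2]
  have hfin : (∑' k : ℤ, ((2:ℝ) ^ k * ‖Ψ ((2:ℝ) ^ k * x)‖) ^ 2) ^ ((1:ℝ)/2)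
      ≤ ((3 * C / a) ^ 2) ^ ((1:ℝ)/2) :=
    Real.rpow_le_rpow hT0 (htsum.trans hsq) (by norm_num)
  have h3 : (0:ℝ) ≤ 3 * C / a := by positivity
  have heq : ((3 * C / a) ^ 2) ^ ((1:ℝ)/2) = 3 * C / a := by
    rw [← Real.rpow_natCast (3 * C / a) 2, ← Real.rpow_mul h3]
    norm_num
  rw [heq] at hfin
  exact hfin
end

section
/- In the algebra of m×m complex matrices with the normalized Schatten p-norm (standard trace), let f = ∑_{k=2}^m e_{1k} and consider the martingale-transform-type map sending f to ∑_{k=2}^m e_{k1} e_{1k} = ∑_{k=2}^m e_{kk}. Then for 1 < p < 2, ‖∑_{k=2}^m e_{kk}‖_p = (m-1)^{1/p} while ‖∑_{k=2}^m e_{1k}‖_p = (m-1)^{1/2}; hence the ratio (m-1)^{1/p - 1/2} tends to infinity as m → ∞. -/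
open scoped BigOperators

/-- The Schatten `p`-norm of a matrix with respect to the standard trace:
`‖a‖_p = tr(|a|^p)^{1/p} = (∑ᵢ λᵢ(aᴴa)^{p/2})^{1/p}`. -/
noncomputable def schattenNorm {d : ℕ} (p : ℝ) (a : Matrix (Fin d) (Fin d) ℂ) : ℝ :=
  (∑ i, ((Matrix.isHermitian_conjTranspose_mul_self a).eigenvalues i) ^ (p / 2)) ^ (1 / p)

open Matrix Finset

lemma sum_eigen_rpow {d : ℕ} {A : Matrix (Fin d) (Fin d) ℂ} (hA : A.IsHermitian)
    {c t : ℝ} (hc : 0 < c) (hsq : A * A = (c : ℂ) • A) (htr : A.trace = (t : ℂ))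
    {q : ℝ} (hq : 0 < q) :
    ∑ i, hA.eigenvalues i ^ q = c ^ (q - 1) * t := by
  set U : Matrix (Fin d) (Fin d) ℂ := (hA.eigenvectorUnitary : Matrix (Fin d) (Fin d) ℂ) with hU
  have hU1 : U * star U = 1 := (Matrix.mem_unitaryGroup_iff).mp hA.eigenvectorUnitary.2
  have hD : star U * A * U = diagonal (RCLike.ofReal ∘ hA.eigenvalues) :=
    by
      have h := hA.conjStarAlgAut_star_eigenvectorUnitary
      simp only [Unitary.conjStarAlgAut_apply, Unitary.coe_star, star_star] at h
      exact h
  have hsq' : ∀ i, hA.eigenvalues i * hA.eigenvalues i = c * hA.eigenvalues i := by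
    set D : Matrix (Fin d) (Fin d) ℂ := diagonal (RCLike.ofReal ∘ hA.eigenvalues) with hDdef
    have h1 : D * D = (c : ℂ) • D := by
      rw [← hD]
      calc (star U * A * U) * (star U * A * U)
          = star U * (A * (U * star U) * A) * U := by simp only [mul_assoc]
        _ = star U * (A * A) * U := by rw [hU1, mul_one]
        _ = (c : ℂ) • (star U * A * U) := by rw [hsq]; simp [Matrix.mul_smul, Matrix.smul_mul]
    rw [hDdef, Matrix.diagonal_mul_diagonal, ← Matrix.diagonal_smul] at h1
    intro i
    have h2 := congrFun (Matrix.diagonal_injective h1) i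
    simp only [Pi.mul_apply, Pi.smul_apply, Function.comp_apply, smul_eq_mul] at h2
    apply RCLike.ofReal_injective (K := ℂ)
    rw [RCLike.ofReal_mul, RCLike.ofReal_mul]
    exact h2
  have hev : ∀ i, hA.eigenvalues i = 0 ∨ hA.eigenvalues i = c := by
    intro i
    rcases mul_eq_zero.mp (show hA.eigenvalues i * (hA.eigenvalues i - c) = 0 by
      have := hsq' i; ring_nf; nlinarith [hsq' i]) with h | h
    · exact Or.inl h
    · exact Or.inr (by linarith [sub_eq_zero.mp h])
  have htrsum : ∑ i, hA.eigenvalues i = t := by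
    have h2 : (diagonal (RCLike.ofReal ∘ hA.eigenvalues)).trace = A.trace := by
      rw [← hD, Matrix.trace_mul_cycle, hU1, one_mul]
    rw [Matrix.trace_diagonal, htr] at h2
    have : ((∑ i, hA.eigenvalues i : ℝ) : ℂ) = (t : ℂ) := by push_cast at h2 ⊢; simpa using h2
    exact_mod_cast this
  calc ∑ i, hA.eigenvalues i ^ q = ∑ i, c ^ (q - 1) * hA.eigenvalues i := by
        refine Finset.sum_congr rfl fun i _ => ?_
        rcases hev i with h | h
        · rw [h, Real.zero_rpow hq.ne', mul_zero]
        · rw [h, Real.rpow_sub hc, Real.rpow_one, div_mul_cancel₀ _ hc.ne']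
    _ = c ^ (q - 1) * t := by rw [← Finset.mul_sum, htrsum]

lemma schattenNorm_of {d : ℕ} (p : ℝ) (hp : 0 < p) (a : Matrix (Fin d) (Fin d) ℂ)
    {c t : ℝ} (hc : 0 < c) (hsq : (aᴴ * a) * (aᴴ * a) = (c : ℂ) • (aᴴ * a))
    (htr : (aᴴ * a).trace = (t : ℂ)) :
    schattenNorm p a = (c ^ (p / 2 - 1) * t) ^ (1 / p) := by
  unfold schattenNorm
  rw [sum_eigen_rpow (Matrix.isHermitian_conjTranspose_mul_self a) hc hsq htr (by positivity)]

-- concrete matrices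
lemma diag_sum_eq {m : ℕ} (i0 : Fin m) :
    (∑ k ∈ univ.erase i0, single k k (1 : ℂ))
      = diagonal (fun k => if k = i0 then 0 else 1) := by
  ext i j
  rw [Matrix.sum_apply]
  simp only [single, of_apply, diagonal_apply]
  by_cases hij : i = j
  · subst hij
    simp only [and_self]
    rw [Finset.sum_ite_eq' (univ.erase i0) i (fun _ => (1 : ℂ))]
    by_cases hi : i = i0 <;> simp [hi, Finset.mem_erase]
  · rw [Finset.sum_eq_zero, if_neg hij]
    rintro k -
    rw [if_neg]
    rintro ⟨rfl, rfl⟩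
    exact hij rfl

lemma f_apply {m : ℕ} (i0 : Fin m) (l i : Fin m) :
    (∑ k ∈ univ.erase i0, single i0 k (1 : ℂ)) l i
      = if l = i0 ∧ i ≠ i0 then 1 else 0 := by
  rw [Matrix.sum_apply]
  simp only [single, of_apply]
  rw [Finset.sum_congr rfl (g := fun k => if i0 = l then (if k = i then (1:ℂ) else 0) else 0)
    (fun k _ => by by_cases h1 : i0 = l <;> by_cases h2 : k = i <;> simp [h1, h2])]
  by_cases hl : i0 = l
  · subst hl
    simp only [eq_self_iff_true, if_true, true_and]
    rw [Finset.sum_ite_eq' (univ.erase i0) i (fun _ => (1 : ℂ))]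
    by_cases hi : i = i0 <;> simp [hi, Finset.mem_erase]
  · rw [Finset.sum_congr rfl (fun k _ => if_neg hl), Finset.sum_const_zero, if_neg]
    rintro ⟨rfl, -⟩; exact hl rfl

lemma f_conj_mul {m : ℕ} (i0 : Fin m) :
    ((∑ k ∈ univ.erase i0, single i0 k (1 : ℂ))ᴴ
        * (∑ k ∈ univ.erase i0, single i0 k (1 : ℂ)))
      = Matrix.of (fun i j => if i = i0 ∨ j = i0 then 0 else (1 : ℂ)) := by
  ext i j
  rw [Matrix.mul_apply]
  simp only [Matrix.conjTranspose_apply, f_apply, Matrix.of_apply]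
  by_cases hi : i = i0 <;> by_cases hj : j = i0 <;>
    simp [hi, hj, apply_ite (star : ℂ → ℂ), Finset.sum_ite_eq', Finset.mem_univ]

lemma sum_ite_card {m : ℕ} (i0 : Fin m) :
    ∑ l : Fin m, (if l = i0 then (0 : ℂ) else 1) = (m : ℂ) - 1 := by
  have h : ∀ l : Fin m, (if l = i0 then (0 : ℂ) else 1) = 1 - (if l = i0 then 1 else 0) := by
    intro l; split <;> simp
  simp only [h, Finset.sum_sub_distrib, Finset.sum_const, Finset.card_univ, Fintype.card_fin,
    Finset.sum_ite_eq', Finset.mem_univ, if_true, nsmul_eq_mul, mul_one]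

lemma B_mul_B {m : ℕ} (i0 : Fin m) :
    (Matrix.of (fun i j => if i = i0 ∨ j = i0 then 0 else (1 : ℂ))) *
      (Matrix.of (fun i j => if i = i0 ∨ j = i0 then 0 else (1 : ℂ)))
    = (((m : ℝ) - 1 : ℝ) : ℂ) • Matrix.of (fun i j => if i = i0 ∨ j = i0 then 0 else (1 : ℂ)) := by
  ext i j
  rw [Matrix.mul_apply]
  simp only [Matrix.of_apply, Matrix.smul_apply, smul_eq_mul]
  by_cases hi : i = i0
  · simp [hi]
  · by_cases hj : j = i0
    · simp [hj]
    · rw [Finset.sum_congr rfl (g := fun l => if l = i0 then (0 : ℂ) else 1)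
        (fun l _ => by by_cases h : l = i0 <;> simp [h, hi, hj])]
      rw [sum_ite_card]
      simp only [hi, hj, or_self, if_neg, if_false, mul_one]
      push_cast; ring

lemma B_trace {m : ℕ} (i0 : Fin m) :
    (Matrix.of (fun i j => if i = i0 ∨ j = i0 then 0 else (1 : ℂ))).trace
      = (((m : ℝ) - 1 : ℝ) : ℂ) := by
  rw [Matrix.trace]
  simp only [Matrix.diag_apply, Matrix.of_apply, or_self]
  rw [sum_ite_card]; push_cast; ring

lemma part1 {m : ℕ} (hm : 2 ≤ m) (i0 : Fin m) {p : ℝ} (hp0 : 0 < p) :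
    schattenNorm p (∑ k ∈ univ.erase i0, Matrix.single k k (1 : ℂ))
      = ((m : ℝ) - 1) ^ (1 / p) := by
  set a := ∑ k ∈ univ.erase i0, Matrix.single k k (1 : ℂ) with ha
  have haeq : a = diagonal (fun k => if k = i0 then 0 else 1) := diag_sum_eq i0
  have haa : aᴴ * a = a := by
    rw [haeq, Matrix.diagonal_conjTranspose, Matrix.diagonal_mul_diagonal]
    refine congrArg _ (funext fun k => ?_)
    by_cases h : k = i0 <;> simp [h, Pi.star_apply, Pi.mul_apply]
  have hsq : (aᴴ * a) * (aᴴ * a) = ((1 : ℝ) : ℂ) • (aᴴ * a) := by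
    rw [haa, haeq, Matrix.diagonal_mul_diagonal,
      show ((1 : ℝ) : ℂ) = 1 by norm_num, one_smul]
    refine congrArg _ (funext fun k => ?_)
    by_cases h : k = i0 <;> simp [h, Pi.mul_apply]
  have htr : (aᴴ * a).trace = (((m : ℝ) - 1 : ℝ) : ℂ) := by
    rw [haa, haeq, Matrix.trace_diagonal, sum_ite_card]
    push_cast; ring
  rw [schattenNorm_of p hp0 a one_pos hsq htr, Real.one_rpow, one_mul]

lemma part2 {m : ℕ} (hm : 2 ≤ m) (i0 : Fin m) {p : ℝ} (hp0 : 0 < p) :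
    schattenNorm p (∑ k ∈ univ.erase i0, Matrix.single i0 k (1 : ℂ))
      = ((m : ℝ) - 1) ^ ((1 : ℝ) / 2) := by
  have hm1 : (0 : ℝ) < (m : ℝ) - 1 := by
    have h2 : (2 : ℝ) ≤ (m : ℝ) := by exact_mod_cast hm
    linarith
  set f := ∑ k ∈ univ.erase i0, Matrix.single i0 k (1 : ℂ) with hfdef
  have hB := f_conj_mul i0
  have hsq : (fᴴ * f) * (fᴴ * f) = (((m : ℝ) - 1 : ℝ) : ℂ) • (fᴴ * f) := by
    rw [hB]; exact B_mul_B i0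
  have htr : (fᴴ * f).trace = (((m : ℝ) - 1 : ℝ) : ℂ) := by rw [hB]; exact B_trace i0
  rw [schattenNorm_of p hp0 f hm1 hsq htr,
    Real.rpow_sub hm1, Real.rpow_one, div_mul_cancel₀ _ hm1.ne',
    ← Real.rpow_mul hm1.le]
  congr 1
  have hpne : p ≠ 0 := ne_of_gt hp0
  field_simp

/-- The matrix counterexample of Section 7: for `f = ∑_{k=2}^m e_{1k}` the martingale-transform
type map `f ↦ ∑_{k=2}^m e_{k1} e_{1k} = ∑_{k=2}^m e_{kk}` satisfies, for `1 < p < 2`,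
`‖∑ e_{kk}‖_p = (m-1)^{1/p}` while `‖∑ e_{1k}‖_p = (m-1)^{1/2}`; hence the ratio
`(m-1)^{1/p - 1/2}` tends to infinity as `m → ∞`. -/
theorem martingale_transform_counterexample (p : ℝ) (hp1 : 1 < p) (hp2 : p < 2) :
    (∀ (m : ℕ) (hm : 2 ≤ m),
      schattenNorm p (∑ k ∈ Finset.univ.erase (⟨0, by omega⟩ : Fin m),
          Matrix.single k k (1 : ℂ)) = ((m : ℝ) - 1) ^ (1 / p) ∧
      schattenNorm p (∑ k ∈ Finset.univ.erase (⟨0, by omega⟩ : Fin m),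
          Matrix.single (⟨0, by omega⟩ : Fin m) k (1 : ℂ))
        = ((m : ℝ) - 1) ^ ((1 : ℝ) / 2)) ∧
    Filter.Tendsto (fun m : ℕ => ((m : ℝ) - 1) ^ (1 / p - 1 / 2))
      Filter.atTop Filter.atTop := by
  have hp0 : (0 : ℝ) < p := by linarith
  refine ⟨fun m hm => ⟨part1 hm _ hp0, part2 hm _ hp0⟩, ?_⟩
  have hexp : 0 < 1 / p - 1 / 2 := by
    have h : (1 : ℝ) / 2 < 1 / p := one_div_lt_one_div_of_lt hp0 hp2
    linarith
  have h1 : Filter.Tendsto (fun m : ℕ => (m : ℝ) - 1) Filter.atTop Filter.atTop := by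
    have := Filter.tendsto_atTop_add_const_right Filter.atTop (-1 : ℝ)
      tendsto_natCast_atTop_atTop
    simpa [sub_eq_add_neg] using this
  have h2 := (tendsto_rpow_atTop hexp).comp h1
  simpa [Function.comp_def] using h2
end

section
/- Let T be an L²-bounded operator with ‖T‖_{B(L²)} ≤ 1 whose kernel satisfies |k(x,y)| ≤ C|x-y|^{-n}. Then for any x₀ ∈ ℝⁿ and radii r₂ > 2r₁ > 0, and any bounded functions f, g supported in the balls B_{r₁}(x₀) and B_{r₂}(x₀) respectively, |⟨Tf, g⟩| ≤ c_n (1+C) r₁ⁿ log(r₂/r₁) ‖f‖_∞ ‖g‖_∞. -/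
open MeasureTheory Metric Set
open scoped ENNReal NNReal

lemma eLpNorm_bound_of_support (n : ℕ) (x₀ : Fin n → ℝ) (r M : ℝ) (hr : 0 ≤ r)
    (f : (Fin n → ℝ) → ℂ) (hM : ∀ x, ‖f x‖ ≤ M)
    (hsupp : Function.support f ⊆ closedBall x₀ r) :
    eLpNorm f 2 volume ≤ ENNReal.ofReal (M * ((2*r)^n) ^ (1/2 : ℝ)) := by
  have hM0 : 0 ≤ M := (norm_nonneg (f x₀)).trans (hM x₀)
  have hmono : ∀ x, ‖f x‖ ≤ ‖(closedBall x₀ r).indicator (fun _ => M) x‖ := by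
    intro x
    by_cases hx : x ∈ closedBall x₀ r
    · rw [indicator_of_mem hx, Real.norm_of_nonneg hM0]; exact hM x
    · rw [indicator_of_notMem hx]
      have : f x = 0 := by
        by_contra h
        exact hx (hsupp (Function.mem_support.mpr h))
      simp [this]
  calc eLpNorm f 2 volume
      ≤ eLpNorm ((closedBall x₀ r).indicator (fun _ => M)) 2 volume := eLpNorm_mono hmono
    _ = ‖M‖₊ * volume (closedBall x₀ r) ^ (1 / (2:ℝ≥0∞).toReal) :=
        eLpNorm_indicator_const measurableSet_closedBall two_ne_zero ENNReal.ofNat_ne_top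
    _ = ENNReal.ofReal (M * ((2*r)^n) ^ (1/2 : ℝ)) := by
        have h2 : (1 / (2:ℝ≥0∞).toReal) = (1/2 : ℝ) := by norm_num
        rw [Real.volume_pi_closedBall _ hr, Fintype.card_fin,
          ← enorm_eq_nnnorm, Real.enorm_eq_ofReal hM0, h2,
          ENNReal.ofReal_rpow_of_nonneg (by positivity) (by norm_num),
          ← ENNReal.ofReal_mul hM0]

lemma radial_annulus_integral (n : ℕ) (hn : 0 < n) (x₀ : Fin n → ℝ) (a b : ℝ)
    (ha : 0 < a) (hab : a ≤ b) :
    ∫ x : Fin n → ℝ, ((closedBall x₀ b \ closedBall x₀ a).indicator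
      (fun x => (dist x x₀ ^ n)⁻¹)) x = n * 2 ^ n * Real.log (b / a) := by
  haveI : Nontrivial (Fin n → ℝ) := by
    have : Nonempty (Fin n) := ⟨⟨0, hn⟩⟩
    infer_instance
  set φ : ℝ → ℝ := (Set.Ioc a b).indicator (fun s => (s ^ n)⁻¹) with hφ
  have hpt : ∀ x : Fin n → ℝ, ((closedBall x₀ b \ closedBall x₀ a).indicator
      (fun x => (dist x x₀ ^ n)⁻¹)) x = φ ‖x - x₀‖ := by
    intro x
    have hdist : dist x x₀ = ‖x - x₀‖ := dist_eq_norm x x₀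
    by_cases hx : x ∈ closedBall x₀ b \ closedBall x₀ a
    · rw [Set.indicator_of_mem hx, hφ, Set.indicator_of_mem, hdist]
      obtain ⟨h1, h2⟩ := hx
      simp only [mem_closedBall] at h1 h2
      exact ⟨by rw [← hdist]; exact lt_of_not_ge h2, by rw [← hdist]; exact h1⟩
    · rw [Set.indicator_of_notMem hx, hφ, Set.indicator_of_notMem]
      intro hmem
      exact hx ⟨by simpa [mem_closedBall, hdist] using hmem.2,
        by simp only [mem_closedBall, hdist]; exact not_le.mpr hmem.1⟩
  simp_rw [hpt]
  have htrans : ∫ x : Fin n → ℝ, φ ‖x - x₀‖ = ∫ x : Fin n → ℝ, φ ‖x‖ :=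
    integral_sub_right_eq_self (fun x => φ ‖x‖) x₀
  rw [htrans, integral_fun_norm_addHaar (volume : Measure (Fin n → ℝ)) φ]
  have hdim : Module.finrank ℝ (Fin n → ℝ) = n := by
    rw [Module.finrank_fintype_fun_eq_card, Fintype.card_fin]
  rw [hdim]
  have hball : (volume (ball (0 : Fin n → ℝ) 1)).toReal = 2 ^ n := by
    rw [Real.volume_pi_ball _ one_pos, ENNReal.toReal_ofReal (by positivity)]
    simp [Fintype.card_fin]
  rw [measureReal_def, hball]
  have hint : ∫ y in Set.Ioi (0:ℝ), y ^ (n - 1) • φ y = Real.log (b / a) := by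
    have h1 : ∀ y ∈ Set.Ioi (0:ℝ), y ^ (n-1) • φ y = (Set.Ioc a b).indicator (fun y => y⁻¹) y := by
      intro y hy
      by_cases hmem : y ∈ Set.Ioc a b
      · rw [hφ, Set.indicator_of_mem hmem, Set.indicator_of_mem hmem, smul_eq_mul]
        have hy0 : (0:ℝ) < y := hy
        field_simp
        rw [← pow_succ]
        congr 1
        omega
      · rw [hφ, Set.indicator_of_notMem hmem, Set.indicator_of_notMem hmem, smul_zero]
    rw [setIntegral_congr_fun measurableSet_Ioi h1, setIntegral_indicator measurableSet_Ioc]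
    have h2 : Set.Ioi (0:ℝ) ∩ Set.Ioc a b = Set.Ioc a b := by
      apply Set.inter_eq_right.mpr
      intro y hy; exact lt_trans ha hy.1
    rw [h2, ← intervalIntegral.integral_of_le hab]
    exact integral_inv_of_pos ha (lt_of_lt_of_le ha hab)
  rw [hint, nsmul_eq_mul, smul_eq_mul]
  ring

/-- Localization estimate (Paragraph 2.1): let `T` be `L²`-normalized (`‖T‖_{B(L²)} ≤ 1`) with
kernel satisfying `|k(x,y)| ≤ C|x-y|^{-n}` (ℓ∞ metric).  Then for `x₀ ∈ ℝⁿ`, radii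
`r₂ > 2r₁ > 0`, and bounded `f, g` supported in `B_{r₁}(x₀)` and `B_{r₂}(x₀)` respectively,
`|⟨Tf, g⟩| ≤ c_n (1+C) r₁ⁿ log(r₂/r₁) ‖f‖_∞ ‖g‖_∞`. -/
theorem localization_estimate (n : ℕ) :
    ∃ c : ℝ, 0 < c ∧
      ∀ (C : ℝ) (T : ((Fin n → ℝ) → ℂ) → ((Fin n → ℝ) → ℂ))
        (k : (Fin n → ℝ) → (Fin n → ℝ) → ℂ),
        0 ≤ C →
        (∀ h : (Fin n → ℝ) → ℂ, eLpNorm (T h) 2 volume ≤ eLpNorm h 2 volume) →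
        (∀ (h : (Fin n → ℝ) → ℂ) (x : Fin n → ℝ),
          x ∉ tsupport h → T h x = ∫ y, k x y * h y) →
        (∀ x y, x ≠ y → ‖k x y‖ ≤ C / dist x y ^ n) →
        ∀ (x₀ : Fin n → ℝ) (r₁ r₂ : ℝ), 0 < r₁ → 2 * r₁ < r₂ →
        ∀ (f g : (Fin n → ℝ) → ℂ) (Mf Mg : ℝ),
          Measurable f → Measurable g → Measurable (T f) →
          (∀ x, ‖f x‖ ≤ Mf) → (∀ x, ‖g x‖ ≤ Mg) →
          Function.support f ⊆ Metric.closedBall x₀ r₁ →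
          Function.support g ⊆ Metric.closedBall x₀ r₂ →
          ‖∫ x, T f x * (starRingEnd ℂ) (g x)‖
            ≤ c * (1 + C) * r₁ ^ n * Real.log (r₂ / r₁) * Mf * Mg := by
  have hlog2 : (0:ℝ) < Real.log 2 := Real.log_pos one_lt_two
  refine ⟨(4:ℝ)^n / Real.log 2 + n * 8^n, by positivity, ?_⟩
  intro C T k hC hT hTk hk x₀ r₁ r₂ hr₁ hr₁₂ f g Mf Mg hfm hgm hTfm hMf hMg hsf hsg
  have hMf0 : 0 ≤ Mf := (norm_nonneg (f x₀)).trans (hMf x₀)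
  have hMg0 : 0 ≤ Mg := (norm_nonneg (g x₀)).trans (hMg x₀)
  have hr₂ : 0 < r₂ := lt_trans (by linarith) hr₁₂
  have hratio : (2:ℝ) ≤ r₂ / r₁ := by rw [le_div_iff₀ hr₁]; linarith
  have hlog : Real.log 2 ≤ Real.log (r₂/r₁) := Real.log_le_log two_pos hratio
  have hlogpos : (0:ℝ) < Real.log (r₂/r₁) := lt_of_lt_of_le hlog2 hlog
  -- L² facts
  have eLpf : eLpNorm f 2 volume ≤ ENNReal.ofReal (Mf * ((2*r₁)^n)^(1/2:ℝ)) :=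
    eLpNorm_bound_of_support n x₀ r₁ Mf hr₁.le f hMf hsf
  have memf : MemLp f 2 volume :=
    ⟨hfm.aestronglyMeasurable, lt_of_le_of_lt eLpf ENNReal.ofReal_lt_top⟩
  have memTf : MemLp (T f) 2 volume :=
    ⟨hTfm.aestronglyMeasurable, lt_of_le_of_lt (hT f) memf.2⟩
  have memg : MemLp g 2 volume :=
    ⟨hgm.aestronglyMeasurable,
      lt_of_le_of_lt (eLpNorm_bound_of_support n x₀ r₂ Mg hr₂.le g hMg hsg)
        ENNReal.ofReal_lt_top⟩
  have hconj : MemLp (fun x => (starRingEnd ℂ) (g x)) 2 volume := by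
    have hm : Measurable fun x => (starRingEnd ℂ) (g x) := by
      exact Complex.continuous_conj.measurable.comp hgm
    refine ⟨hm.aestronglyMeasurable, ?_⟩
    exact lt_of_le_of_lt (eLpNorm_mono fun x => le_of_eq (RCLike.norm_conj _)) memg.2
  have hint : Integrable (fun x => T f x * (starRingEnd ℂ) (g x)) volume := by
    have h1 : MemLp (fun x => (starRingEnd ℂ) (g x) • T f x) 1 volume :=
      MemLp.smul memTf hconj (hpqr := ⟨by rw [inv_one, ENNReal.inv_two_add_inv_two]⟩)
    exact (memLp_one_iff_integrable.mp h1).congr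
      (Filter.Eventually.of_forall fun x => by simp [smul_eq_mul, mul_comm])
  have hInt : Integrable (fun x => ‖T f x‖ * ‖g x‖) volume := by
    have h1 := hint.norm
    simpa [norm_mul, RCLike.norm_conj] using h1
  have hstep1 : ‖∫ x, T f x * (starRingEnd ℂ) (g x)‖ ≤ ∫ x, ‖T f x‖ * ‖g x‖ := by
    refine (norm_integral_le_integral_norm _).trans_eq ?_
    exact integral_congr_ae (Filter.Eventually.of_forall fun x => by
      simp [norm_mul, RCLike.norm_conj])
  set A := closedBall x₀ (2*r₁) with hAdef
  have hsplit : ∫ x, ‖T f x‖ * ‖g x‖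
      = (∫ x in A, ‖T f x‖ * ‖g x‖) + ∫ x in Aᶜ, ‖T f x‖ * ‖g x‖ :=
    (integral_add_compl measurableSet_closedBall hInt).symm
  -- Near part
  have hnear : ∫ x in A, ‖T f x‖ * ‖g x‖ ≤ 4^n * r₁^n * (Mf * Mg) := by
    have hconj22 : Real.HolderConjugate 2 2 := ⟨by norm_num, by norm_num, by norm_num⟩
    have h2 : (ENNReal.ofReal (2:ℝ)) = 2 := by norm_num
    have hTf2 : MemLp (T f) (ENNReal.ofReal 2) (volume.restrict A) := by
      rw [h2]; exact memTf.restrict A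
    have hg2 : MemLp g (ENNReal.ofReal 2) (volume.restrict A) := by
      rw [h2]; exact memg.restrict A
    have hH := integral_mul_norm_le_Lp_mul_Lq hconj22 hTf2 hg2
    rw [one_div] at hH
    refine hH.trans ?_
    have hTsq_int : Integrable (fun a => ‖T f a‖ ^ (2:ℝ)) volume := by
      have := memTf.integrable_norm_rpow two_ne_zero ENNReal.ofNat_ne_top
      simpa using this
    have hTglob : ∫ a in A, ‖T f a‖ ^ (2:ℝ) ≤ ∫ a, ‖T f a‖ ^ (2:ℝ) :=
      setIntegral_le_integral hTsq_int
        (Filter.Eventually.of_forall fun x => by positivity)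
    have hTnorm : (∫ a, ‖T f a‖ ^ (2:ℝ)) ^ (2:ℝ)⁻¹ ≤ Mf * ((2*r₁)^n)^((2:ℝ)⁻¹) := by
      have heq := memTf.eLpNorm_eq_integral_rpow_norm two_ne_zero ENNReal.ofNat_ne_top
      have hle : eLpNorm (T f) 2 volume ≤ ENNReal.ofReal (Mf * ((2*r₁)^n)^(1/2:ℝ)) :=
        (hT f).trans eLpf
      rw [heq] at hle
      have h3 := (ENNReal.ofReal_le_ofReal_iff (by positivity)).mp hle
      rw [one_div] at h3
      simpa using h3
    have hTset : (∫ a in A, ‖T f a‖ ^ (2:ℝ)) ^ ((2:ℝ)⁻¹) ≤ Mf * ((2*r₁)^n)^((2:ℝ)⁻¹) :=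
      le_trans (Real.rpow_le_rpow (by positivity) hTglob (by norm_num)) hTnorm
    have hAvol : (volume A).toReal = (4*r₁)^n := by
      rw [hAdef, Real.volume_pi_closedBall _ (by positivity), Fintype.card_fin,
        ENNReal.toReal_ofReal (by positivity)]
      norm_num
      ring_nf
    have hgset : (∫ a in A, ‖g a‖ ^ (2:ℝ)) ^ ((2:ℝ)⁻¹) ≤ Mg * ((4*r₁)^n)^((2:ℝ)⁻¹) := by
      have hgsq : ∫ a in A, ‖g a‖ ^ (2:ℝ) ≤ Mg ^ (2:ℝ) * (4*r₁)^n := by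
        have hmono : ∫ a in A, ‖g a‖ ^ (2:ℝ) ≤ ∫ _ in A, Mg ^ (2:ℝ) := by
          refine setIntegral_mono_on ?_ ?_ measurableSet_closedBall ?_
          · have := memg.integrable_norm_rpow two_ne_zero ENNReal.ofNat_ne_top
            simpa using this.integrableOn
          · exact (integrableOn_const_iff).mpr (Or.inr (by
              rw [hAdef, Real.volume_pi_closedBall _ (by positivity)]
              exact ENNReal.ofReal_lt_top))
          · intro x _
            exact Real.rpow_le_rpow (norm_nonneg _) (hMg x) (by norm_num)
        refine hmono.trans ?_
        rw [setIntegral_const, measureReal_def, smul_eq_mul, hAvol, mul_comm]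
      calc (∫ a in A, ‖g a‖ ^ (2:ℝ)) ^ ((2:ℝ)⁻¹)
          ≤ (Mg ^ (2:ℝ) * (4*r₁)^n) ^ ((2:ℝ)⁻¹) := by
            refine Real.rpow_le_rpow ?_ hgsq (by norm_num)
            positivity
        _ = Mg * ((4*r₁)^n)^((2:ℝ)⁻¹) := by
            rw [Real.mul_rpow (by positivity) (by positivity),
              ← Real.rpow_mul hMg0]
            norm_num
    calc (∫ a in A, ‖T f a‖ ^ (2:ℝ)) ^ ((2:ℝ)⁻¹) * (∫ a in A, ‖g a‖ ^ (2:ℝ)) ^ ((2:ℝ)⁻¹)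
        ≤ (Mf * ((2*r₁)^n)^((2:ℝ)⁻¹)) * (Mg * ((4*r₁)^n)^((2:ℝ)⁻¹)) := by
          refine mul_le_mul hTset hgset (by positivity) (by positivity)
      _ ≤ 4^n * r₁^n * (Mf * Mg) := by
          have key : ((2*r₁)^n)^((2:ℝ)⁻¹) * ((4*r₁)^n)^((2:ℝ)⁻¹) ≤ 4^n * r₁^n := by
            rw [← Real.mul_rpow (by positivity) (by positivity)]
            have h1 : (2*r₁)^n * (4*r₁)^n = (8*r₁^2)^n := by
              rw [← mul_pow]; ring_nf
            rw [h1]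
            have h2 : (8*r₁^2 : ℝ) ≤ (4*r₁)^2 := by nlinarith
            have h3 : ((8*r₁^2:ℝ)^n)^((2:ℝ)⁻¹) ≤ (((4*r₁)^2)^n)^((2:ℝ)⁻¹) := by
              refine Real.rpow_le_rpow (by positivity) (pow_le_pow_left₀ (by positivity) h2 n) (by norm_num)
            refine h3.trans ?_
            rw [← pow_mul]
            rw [← Real.rpow_natCast (4*r₁) (2*n), ← Real.rpow_mul (by positivity)]
            have : ((2*n : ℕ) : ℝ) * ((2:ℝ)⁻¹) = (n:ℝ) := by push_cast; ring
            rw [this, Real.rpow_natCast, mul_pow]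
          calc (Mf * ((2*r₁)^n)^((2:ℝ)⁻¹)) * (Mg * ((4*r₁)^n)^((2:ℝ)⁻¹))
              = (((2*r₁)^n)^((2:ℝ)⁻¹) * ((4*r₁)^n)^((2:ℝ)⁻¹)) * (Mf * Mg) := by ring
            _ ≤ (4^n * r₁^n) * (Mf * Mg) := by
                refine mul_le_mul_of_nonneg_right key (by positivity)
  -- Far part
  have hfar : ∫ x in Aᶜ, ‖T f x‖ * ‖g x‖
      ≤ C * (n * 8^n) * r₁^n * Real.log (r₂/r₁) * (Mf * Mg) := by
    rcases Nat.eq_zero_or_pos n with hn0 | hn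
    · subst hn0
      have hAuniv : A = Set.univ := by
        apply Set.eq_univ_iff_forall.mpr
        intro x
        have hx : x = x₀ := Subsingleton.elim x x₀
        rw [hAdef, mem_closedBall, hx, dist_self]
        linarith
      rw [hAuniv, Set.compl_univ]
      simp
    · have hftsupp : tsupport f ⊆ closedBall x₀ r₁ :=
        closure_minimal hsf isClosed_closedBall
      have hTfar : ∀ x, x ∈ Aᶜ → ‖T f x‖ ≤ C * 4^n * Mf * r₁^n * ((dist x x₀)^n)⁻¹ := by
        intro x hx
        have hdx : 2*r₁ < dist x x₀ := by
          have := hx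
          rw [hAdef] at this
          simpa [mem_closedBall] using this
        have hdpos : (0:ℝ) < dist x x₀ := by linarith
        have hxnot : x ∉ tsupport f := by
          intro hmem
          have := hftsupp hmem
          rw [mem_closedBall] at this
          linarith
        rw [hTk f x hxnot]
        have hbound : ∀ y, ‖k x y * f y‖
            ≤ (closedBall x₀ r₁).indicator (fun _ => C * 2^n * Mf * ((dist x x₀)^n)⁻¹) y := by
          intro y
          by_cases hy : y ∈ closedBall x₀ r₁
          · rw [indicator_of_mem hy]
            have hdy : dist x x₀ / 2 ≤ dist x y := by
              have h1 : dist x x₀ ≤ dist x y + dist y x₀ := dist_triangle x y x₀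
              have h2 : dist y x₀ ≤ r₁ := mem_closedBall.mp hy
              linarith
            have hxy : x ≠ y := by
              intro he
              rw [he] at hdx
              have h2' : dist y x₀ ≤ r₁ := mem_closedBall.mp hy
              linarith
            have hk1 : ‖k x y‖ ≤ C / dist x y ^ n := hk x y hxy
            have hk2 : C / dist x y ^ n ≤ C * 2^n * ((dist x x₀)^n)⁻¹ := by
              rw [div_eq_mul_inv]
              have hd2 : (0:ℝ) < dist x x₀ / 2 := by linarith
              have hpw : (dist x x₀ / 2)^n ≤ dist x y ^ n :=
                pow_le_pow_left₀ hd2.le hdy n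
              calc C * (dist x y ^ n)⁻¹ ≤ C * ((dist x x₀/2)^n)⁻¹ := by
                    refine mul_le_mul_of_nonneg_left ?_ hC
                    exact inv_anti₀ (by positivity) hpw
                _ = C * 2^n * ((dist x x₀)^n)⁻¹ := by
                    rw [div_pow]
                    field_simp
            calc ‖k x y * f y‖ = ‖k x y‖ * ‖f y‖ := norm_mul _ _
              _ ≤ (C * 2^n * ((dist x x₀)^n)⁻¹) * Mf := by
                  refine mul_le_mul (hk1.trans hk2) (hMf y) (norm_nonneg _) ?_
                  have : (0:ℝ) ≤ ((dist x x₀)^n)⁻¹ := by positivity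
                  positivity
              _ = C * 2^n * Mf * ((dist x x₀)^n)⁻¹ := by ring
          · rw [indicator_of_notMem hy]
            have : f y = 0 := by
              by_contra h
              exact hy (hsf (Function.mem_support.mpr h))
            simp [this]
        calc ‖∫ y, k x y * f y‖ ≤ ∫ y, ‖k x y * f y‖ := norm_integral_le_integral_norm _
          _ ≤ ∫ y, (closedBall x₀ r₁).indicator
                (fun _ => C * 2^n * Mf * ((dist x x₀)^n)⁻¹) y := by
              refine integral_mono_of_nonneg
                (Filter.Eventually.of_forall fun y => norm_nonneg _) ?_
                (Filter.Eventually.of_forall hbound)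
              rw [integrable_indicator_iff measurableSet_closedBall]
              refine (integrableOn_const_iff).mpr (Or.inr ?_)
              rw [Real.volume_pi_closedBall _ hr₁.le]
              exact ENNReal.ofReal_lt_top
          _ = (C * 2^n * Mf * ((dist x x₀)^n)⁻¹) * (2*r₁)^n := by
              rw [integral_indicator_const _ measurableSet_closedBall, measureReal_def,
                Real.volume_pi_closedBall _ hr₁.le, Fintype.card_fin,
                ENNReal.toReal_ofReal (by positivity), smul_eq_mul, mul_comm]
          _ = C * 4^n * Mf * r₁^n * ((dist x x₀)^n)⁻¹ := by
              have h24 : ((2:ℝ)*r₁)^n = 2^n * r₁^n := mul_pow 2 r₁ n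
              have h42 : (2:ℝ)^n * 2^n = 4^n := by
                rw [← mul_pow]; norm_num
              rw [h24, ← h42]
              ring
      set K := C * 4^n * Mf * r₁^n * Mg with hKdef
      have hKnn : (0:ℝ) ≤ K := by positivity
      set Ann := closedBall x₀ r₂ \ A with hAnn
      have hG : ∀ x, Aᶜ.indicator (fun x => ‖T f x‖ * ‖g x‖) x
          ≤ Ann.indicator (fun x => K * ((dist x x₀)^n)⁻¹) x := by
        intro x
        have hnn : (0:ℝ) ≤ K * ((dist x x₀)^n)⁻¹ :=
          mul_nonneg hKnn (inv_nonneg.mpr (pow_nonneg dist_nonneg n))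
        by_cases hx : x ∈ Aᶜ
        · rw [indicator_of_mem hx]
          by_cases hx2 : x ∈ closedBall x₀ r₂
          · rw [indicator_of_mem (Set.mem_diff_of_mem hx2 hx)]
            have hnn2 : (0:ℝ) ≤ C * 4^n * Mf * r₁^n * ((dist x x₀)^n)⁻¹ := by
              have : (0:ℝ) ≤ ((dist x x₀)^n)⁻¹ := by positivity
              positivity
            calc ‖T f x‖ * ‖g x‖ ≤ (C * 4^n * Mf * r₁^n * ((dist x x₀)^n)⁻¹) * Mg :=
                  mul_le_mul (hTfar x hx) (hMg x) (norm_nonneg _) hnn2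
              _ = K * ((dist x x₀)^n)⁻¹ := by rw [hKdef]; ring
          · have hg0 : g x = 0 := by
              by_contra h
              exact hx2 (hsg (Function.mem_support.mpr h))
            rw [indicator_of_notMem (fun hmem => hx2 hmem.1)]
            simp [hg0]
        · rw [indicator_of_notMem hx]
          exact Set.indicator_nonneg (fun y _ =>
            mul_nonneg hKnn (inv_nonneg.mpr (pow_nonneg dist_nonneg n))) x
      have hAnnMeas : MeasurableSet Ann :=
        measurableSet_closedBall.diff measurableSet_closedBall
      have hGint : Integrable (Ann.indicator (fun x => K * ((dist x x₀)^n)⁻¹)) volume := by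
        rw [integrable_indicator_iff hAnnMeas]
        have hmeas : Measurable (fun x : Fin n → ℝ => K * ((dist x x₀)^n)⁻¹) :=
          (((continuous_id.dist continuous_const).pow n).measurable.inv).const_mul K
        refine Measure.integrableOn_of_bounded (M := K * ((2*r₁)^n)⁻¹) ?_
          hmeas.aestronglyMeasurable ?_
        · exact ((measure_mono (Set.diff_subset)).trans_lt (by
            rw [Real.volume_pi_closedBall _ hr₂.le]
            exact ENNReal.ofReal_lt_top)).ne
        · rw [ae_restrict_iff' hAnnMeas]
          refine Filter.Eventually.of_forall fun x hx => ?_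
          have hdx : 2*r₁ < dist x x₀ := by
            have := hx.2
            rw [hAdef] at this
            simpa [mem_closedBall] using this
          have h2r : (0:ℝ) < 2*r₁ := by linarith
          have hinv : ((dist x x₀)^n)⁻¹ ≤ ((2*r₁)^n)⁻¹ := by
            refine inv_anti₀ (by positivity) ?_
            exact pow_le_pow_left₀ h2r.le hdx.le n
          rw [Real.norm_of_nonneg (mul_nonneg hKnn
            (inv_nonneg.mpr (pow_nonneg dist_nonneg n)))]
          exact mul_le_mul_of_nonneg_left hinv hKnn
      have hmain : ∫ x in Aᶜ, ‖T f x‖ * ‖g x‖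
          ≤ ∫ x, Ann.indicator (fun x => K * ((dist x x₀)^n)⁻¹) x := by
        rw [← integral_indicator measurableSet_closedBall.compl]
        refine integral_mono_of_nonneg ?_ hGint (Filter.Eventually.of_forall hG)
        refine Filter.Eventually.of_forall fun x => ?_
        exact Set.indicator_nonneg (fun y _ =>
          mul_nonneg (norm_nonneg _) (norm_nonneg _)) x
      have hsplitK : (fun x : Fin n → ℝ => Ann.indicator
          (fun x => K * ((dist x x₀)^n)⁻¹) x)
          = fun x => K * Ann.indicator (fun x => ((dist x x₀)^n)⁻¹) x := by
        funext x
        by_cases hx : x ∈ Ann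
        · rw [indicator_of_mem hx, indicator_of_mem hx]
        · rw [indicator_of_notMem hx, indicator_of_notMem hx, mul_zero]
      have hradial := radial_annulus_integral n hn x₀ (2*r₁) r₂ (by positivity) hr₁₂.le
      have hIval : ∫ x, Ann.indicator (fun x => K * ((dist x x₀)^n)⁻¹) x
          = K * (n * 2^n * Real.log (r₂ / (2*r₁))) := by
        rw [hsplitK, integral_const_mul, hAnn, hAdef, hradial]
      refine (hmain.trans_eq hIval).trans ?_
      have hlogle : Real.log (r₂/(2*r₁)) ≤ Real.log (r₂/r₁) := by
        refine Real.log_le_log (by positivity) ?_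
        refine div_le_div_of_nonneg_left hr₂.le hr₁ (by linarith)
      have h48 : (4:ℝ)^n * 2^n = 8^n := by rw [← mul_pow]; norm_num
      calc K * (n * 2^n * Real.log (r₂ / (2*r₁)))
          ≤ K * (n * 2^n * Real.log (r₂ / r₁)) := by
            refine mul_le_mul_of_nonneg_left ?_ hKnn
            refine mul_le_mul_of_nonneg_left hlogle (by positivity)
        _ = (C * (n * ((4:ℝ)^n * 2^n)) * r₁^n * Real.log (r₂/r₁) * (Mf * Mg)) := by
            rw [hKdef]; ring
        _ = C * (n * 8^n) * r₁^n * Real.log (r₂/r₁) * (Mf * Mg) := by rw [h48]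
  have htotal : ‖∫ x, T f x * (starRingEnd ℂ) (g x)‖
      ≤ 4^n * r₁^n * (Mf * Mg) + C * (n * 8^n) * r₁^n * Real.log (r₂/r₁) * (Mf * Mg) := by
    refine hstep1.trans ?_
    rw [hsplit]
    exact add_le_add hnear hfar
  refine htotal.trans ?_
  have hP : (0:ℝ) ≤ r₁^n * (Mf * Mg) := by positivity
  have hD : (0:ℝ) ≤ 4^n / Real.log 2 := by positivity
  have h1C : (1:ℝ) ≤ 1 + C := by linarith
  have hlogC : Real.log 2 ≤ (1+C) * Real.log (r₂/r₁) := by nlinarith [hlogpos.le]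
  have h1 : 4^n * r₁^n * (Mf * Mg)
      ≤ (4^n / Real.log 2) * ((1+C) * Real.log (r₂/r₁)) * (r₁^n * (Mf*Mg)) := by
    have e1 : 4^n * r₁^n * (Mf * Mg)
        = (4^n / Real.log 2) * Real.log 2 * (r₁^n * (Mf*Mg)) := by
      field_simp
    rw [e1]
    exact mul_le_mul_of_nonneg_right (mul_le_mul_of_nonneg_left hlogC hD) hP
  have hZ : (0:ℝ) ≤ (n:ℝ) * 8^n * (r₁^n * Real.log (r₂/r₁) * (Mf*Mg)) := by
    have : (0:ℝ) ≤ r₁^n * Real.log (r₂/r₁) * (Mf*Mg) :=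
      mul_nonneg (mul_nonneg (pow_nonneg hr₁.le n) hlogpos.le) (mul_nonneg hMf0 hMg0)
    positivity
  have hCle : C ≤ 1 + C := by linarith
  have h2 : C * (n * 8^n) * r₁^n * Real.log (r₂/r₁) * (Mf*Mg)
      ≤ (1+C) * ((n:ℝ) * 8^n * (r₁^n * Real.log (r₂/r₁) * (Mf*Mg))) := by
    have e2 : C * (n * 8^n) * r₁^n * Real.log (r₂/r₁) * (Mf*Mg)
        = C * ((n:ℝ) * 8^n * (r₁^n * Real.log (r₂/r₁) * (Mf*Mg))) := by ring
    rw [e2]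
    exact mul_le_mul_of_nonneg_right hCle hZ
  calc 4^n * r₁^n * (Mf * Mg) + C * (n * 8^n) * r₁^n * Real.log (r₂/r₁) * (Mf*Mg)
      ≤ (4^n / Real.log 2) * ((1+C) * Real.log (r₂/r₁)) * (r₁^n * (Mf*Mg))
        + (1+C) * ((n:ℝ) * 8^n * (r₁^n * Real.log (r₂/r₁) * (Mf*Mg))) := add_le_add h1 h2
    _ = (4^n / Real.log 2 + n * 8^n) * (1 + C) * r₁ ^ n * Real.log (r₂ / r₁) * Mf * Mg := by
        ring
end

section
/- In the 2m×2m complex matrices with filtration A_s spanned by {e_{ij} : i,j ≤ s} ∪ {e_{kk} : k > s}, let f = ∑_{i,j=1}^{2m} e_{ij} and apply Cuculescu's construction at level λ = 1. Then p_{2k-1} = 0 and p_{2k} = e_{2k-1,2k-1} + e_{2k,2k} for 1 ≤ k ≤ m, and consequently ‖∑_{k=1}^{2m} f_k p_k‖₂² = 2m(m+1) while λ‖f‖₁ = 2m, so the ratio ‖∑_k f_k p_k‖₂²/(λ‖f‖₁) = m+1 tends to infinity. -/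
open scoped BigOperators
open Matrix

/-- The spectral projection `χ_{(0,1]}(M)` of a Hermitian matrix `M` (defined as `0` on
non-Hermitian matrices). -/
noncomputable def chi01 {d : ℕ} (M : Matrix (Fin d) (Fin d) ℂ) : Matrix (Fin d) (Fin d) ℂ :=
  if h : M.IsHermitian then
    (h.eigenvectorUnitary : Matrix (Fin d) (Fin d) ℂ) *
      Matrix.diagonal (fun i => if 0 < h.eigenvalues i ∧ h.eigenvalues i ≤ 1 then (1 : ℂ) else 0) *
      star (h.eigenvectorUnitary : Matrix (Fin d) (Fin d) ℂ)
  else 0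

/-- The conditional expectation onto the subalgebra `A_s` of `M_{2m}(ℂ)` spanned by the matrix
units `e_{ij}` with `i, j ≤ s` (`1`-based; here `0`-based: `i, j < s`) and `e_{kk}` with `k > s`. -/
def condExp19 (m : ℕ) (s : ℕ) (A : Matrix (Fin (2 * m)) (Fin (2 * m)) ℂ) :
    Matrix (Fin (2 * m)) (Fin (2 * m)) ℂ :=
  Matrix.of fun i j => if ((i : ℕ) < s ∧ (j : ℕ) < s) ∨ i = j then A i j else 0

/-- The all-ones `2m × 2m` matrix `f = ∑_{i,j} e_{ij}`. -/
def allOnes (m : ℕ) : Matrix (Fin (2 * m)) (Fin (2 * m)) ℂ := Matrix.of fun _ _ => 1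

/-- Cuculescu's projections at level `λ = 1` for the martingale `f_s = E_s(f)`:
`q 0 = 1` and `q (s+1) = χ_{(0,1]}(q_s f_{s+1} q_s)`. -/
noncomputable def cucQ (m : ℕ) : ℕ → Matrix (Fin (2 * m)) (Fin (2 * m)) ℂ
  | 0 => 1
  | s + 1 => chi01 (cucQ m s * condExp19 m (s + 1) (allOnes m) * cucQ m s)



def Pm (m t : ℕ) : Matrix (Fin (2 * m)) (Fin (2 * m)) ℂ :=
  Matrix.diagonal (fun j => if t ≤ (j : ℕ) then 1 else 0)

def Bmat (m k : ℕ) (h : k < m) : Matrix (Fin (2 * m)) (Fin (2 * m)) ℂ :=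
  Matrix.single ⟨2 * k, by omega⟩ ⟨2 * k, by omega⟩ 1 +
    Matrix.single ⟨2 * k, by omega⟩ ⟨2 * k + 1, by omega⟩ 1 +
    Matrix.single ⟨2 * k + 1, by omega⟩ ⟨2 * k, by omega⟩ 1 +
    Matrix.single ⟨2 * k + 1, by omega⟩ ⟨2 * k + 1, by omega⟩ 1

lemma Bmat_apply (m k : ℕ) (h : k < m) (i j : Fin (2 * m)) :
    Bmat m k h i j =
      if ((i : ℕ) = 2 * k ∨ (i : ℕ) = 2 * k + 1) ∧ ((j : ℕ) = 2 * k ∨ (j : ℕ) = 2 * k + 1)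
      then 1 else 0 := by
  simp only [Bmat, Matrix.add_apply, Matrix.single, Matrix.of_apply, Fin.ext_iff]
  split_ifs <;> simp_all <;> omega

lemma condExp19_allOnes_apply (m s : ℕ) (i j : Fin (2 * m)) :
    condExp19 m s (allOnes m) i j = if ((i : ℕ) < s ∧ (j : ℕ) < s) ∨ i = j then 1 else 0 := by
  simp [condExp19, allOnes]

lemma Pm_herm (m t : ℕ) : (Pm m t).IsHermitian := by
  unfold Matrix.IsHermitian
  ext i j
  simp only [Matrix.conjTranspose_apply, Pm, Matrix.diagonal_apply]
  split_ifs <;> simp_all <;> omega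

lemma Pm_idem (m t : ℕ) : Pm m t * Pm m t = Pm m t := by
  unfold Pm
  rw [Matrix.diagonal_mul_diagonal]
  ext i j
  simp only [Matrix.diagonal_apply]
  split_ifs <;> norm_num

lemma prodOdd (m k : ℕ) :
    Pm m (2 * k) * condExp19 m (2 * k + 1) (allOnes m) * Pm m (2 * k) = Pm m (2 * k) := by
  ext i j
  rw [Pm, Matrix.mul_diagonal, Matrix.diagonal_mul, condExp19_allOnes_apply]
  simp only [Matrix.diagonal_apply, Fin.ext_iff]
  split_ifs <;> simp_all <;> omega

lemma prodEven (m k : ℕ) (h : k < m) :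
    Pm m (2 * k) * condExp19 m (2 * k + 2) (allOnes m) * Pm m (2 * k)
      = Pm m (2 * (k + 1)) + Bmat m k h := by
  ext i j
  rw [Matrix.add_apply, Bmat_apply, Pm, Pm, Matrix.mul_diagonal, Matrix.diagonal_mul,
    condExp19_allOnes_apply]
  simp only [Matrix.diagonal_apply, Fin.ext_iff]
  split_ifs <;> simp_all <;> omega

lemma Bmat_herm (m k : ℕ) (h : k < m) : (Bmat m k h).IsHermitian := by
  unfold Matrix.IsHermitian
  ext i j
  simp only [Matrix.conjTranspose_apply, Bmat_apply]
  split_ifs <;> simp_all <;> tauto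

lemma Pm_mul_Bmat (m k : ℕ) (hk : k < m) : Pm m (2 * (k + 1)) * Bmat m k hk = 0 := by
  ext i j
  rw [Pm, Matrix.diagonal_mul, Bmat_apply]
  simp only [Matrix.zero_apply]
  split_ifs <;> simp_all <;> omega

lemma Bmat_mul_Pm (m k : ℕ) (hk : k < m) : Bmat m k hk * Pm m (2 * (k + 1)) = 0 := by
  ext i j
  rw [Pm, Matrix.mul_diagonal, Bmat_apply]
  simp only [Matrix.zero_apply]
  split_ifs <;> simp_all <;> omega

lemma Bmat_sq (m k : ℕ) (hk : k < m) :
    Bmat m k hk * Bmat m k hk = Bmat m k hk + Bmat m k hk := by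
  obtain ⟨a, b, hab, hBdef⟩ : ∃ a b : Fin (2 * m), a ≠ b ∧ Bmat m k hk =
      Matrix.single a a 1 + Matrix.single a b 1 +
        Matrix.single b a 1 + Matrix.single b b 1 :=
    ⟨_, _, by simp [Fin.ext_iff], rfl⟩
  rw [hBdef]
  have z1 : ∀ (x y : Fin (2 * m)) (c d : ℂ),
      Matrix.single x a c * Matrix.single b y d = 0 := fun x y c d =>
    Matrix.single_mul_single_of_ne (c := c) x a b hab d
  have z2 : ∀ (x y : Fin (2 * m)) (c d : ℂ),
      Matrix.single x b c * Matrix.single a y d = 0 := fun x y c d =>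
    Matrix.single_mul_single_of_ne (c := c) x b a hab.symm d
  simp only [add_mul, mul_add, Matrix.single_mul_single_same, z1, z2,
    mul_one, add_zero, zero_add]
  abel

lemma chi01_cubic {d : ℕ} {M : Matrix (Fin d) (Fin d) ℂ} (hM : M.IsHermitian)
    (hc : M * M * M + (M + M) = M * M + (M * M + M * M)) :
    chi01 M = (M + M) - M * M := by
  have heig : ∀ i, hM.eigenvalues i = 0 ∨ hM.eigenvalues i = 1 ∨ hM.eigenvalues i = 2 := by
    intro i
    set μ := hM.eigenvalues i with hμ
    set v : Fin d → ℂ := ⇑(hM.eigenvectorBasis i) with hvdef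
    have hv : M *ᵥ v = μ • v := hM.mulVec_eigenvectorBasis i
    have hv0 : v ≠ 0 := by
      have h := (hM.eigenvectorBasis).orthonormal.ne_zero i
      intro h0
      exact h (by ext x; exact congrFun h0 x)
    have h2 : (M * M) *ᵥ v = (μ * μ) • v := by
      rw [← Matrix.mulVec_mulVec, hv, Matrix.mulVec_smul, hv, smul_smul]
    have h3 : (M * M * M) *ᵥ v = (μ * μ * μ) • v := by
      rw [← Matrix.mulVec_mulVec, hv, Matrix.mulVec_smul, h2, smul_smul]; ring_nf
    have hcv := congrArg (fun N => N *ᵥ v) hc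
    simp only [Matrix.add_mulVec, h2, h3, hv] at hcv
    have hz : (μ * μ * μ + (μ + μ) - (μ * μ + (μ * μ + μ * μ))) • v = 0 := by
      rw [sub_smul, add_smul, add_smul, add_smul, sub_eq_zero]
      simpa [add_smul] using hcv
    have hsc : μ * μ * μ + (μ + μ) - (μ * μ + (μ * μ + μ * μ)) = 0 := by
      rcases smul_eq_zero.mp hz with h | h
      · exact h
      · exact absurd h hv0
    have hfac : μ * (μ - 1) * (μ - 2) = 0 := by linear_combination hsc
    rcases mul_eq_zero.mp hfac with h | h
    · rcases mul_eq_zero.mp h with h | h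
      · exact Or.inl h
      · exact Or.inr (Or.inl (by linarith))
    · exact Or.inr (Or.inr (by linarith))
  rw [chi01, dif_pos hM]
  set U : Matrix (Fin d) (Fin d) ℂ := (hM.eigenvectorUnitary : Matrix (Fin d) (Fin d) ℂ) with hUdef
  set D : Matrix (Fin d) (Fin d) ℂ := Matrix.diagonal ((RCLike.ofReal : ℝ → ℂ) ∘ hM.eigenvalues) with hDdef
  have h1 : star U * U = 1 := mem_unitaryGroup_iff'.mp hM.eigenvectorUnitary.2
  have hdiag : (Matrix.diagonal (fun i => if 0 < hM.eigenvalues i ∧ hM.eigenvalues i ≤ 1 then (1 : ℂ) else 0))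
      = (D + D) - D * D := by
    rw [hDdef, Matrix.diagonal_mul_diagonal]
    ext i j
    by_cases hij : i = j
    · subst hij
      simp only [Matrix.sub_apply, Matrix.add_apply, Matrix.diagonal_apply_eq, Function.comp_apply]
      rcases heig i with h | h | h <;> rw [h] <;> norm_num
    · simp [Matrix.diagonal_apply_ne _ hij]
  rw [hdiag]
  have e1 : (U * D * star U) * (U * D * star U) = U * (D * D) * star U := by
    simp only [Matrix.mul_assoc]
    rw [← Matrix.mul_assoc (star U) U, h1, Matrix.one_mul]
  have expand : U * ((D + D) - D * D) * star U
      = (U * D * star U + U * D * star U) - U * (D * D) * star U := by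
    noncomm_ring
  have hs : U * D * star U = M := by
    conv_rhs => rw [hM.spectral_theorem]
    rfl
  rw [expand, ← e1, hs]

lemma chi01_Pm (m t : ℕ) : chi01 (Pm m t) = Pm m t := by
  have h := chi01_cubic (Pm_herm m t) (by simp only [Pm_idem])
  rw [h, Pm_idem, add_sub_cancel_right]

lemma odd_step (m k : ℕ) (h : cucQ m (2 * k) = Pm m (2 * k)) :
    cucQ m (2 * k + 1) = Pm m (2 * k) := by
  have e : cucQ m (2 * k + 1)
      = chi01 (cucQ m (2 * k) * condExp19 m (2 * k + 1) (allOnes m) * cucQ m (2 * k)) := rfl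
  rw [e, h, prodOdd, chi01_Pm]

lemma even_step (m k : ℕ) (hk : k < m) (h : cucQ m (2 * k + 1) = Pm m (2 * k)) :
    cucQ m (2 * k + 2) = Pm m (2 * (k + 1)) := by
  have e : cucQ m (2 * k + 2)
      = chi01 (cucQ m (2 * k + 1) * condExp19 m (2 * k + 2) (allOnes m) * cucQ m (2 * k + 1)) :=
    rfl
  rw [e, h, prodEven m k hk]
  set D := Pm m (2 * (k + 1)) with hD
  set B := Bmat m k hk with hB
  have hDB : D * B = 0 := Pm_mul_Bmat m k hk
  have hBD : B * D = 0 := Bmat_mul_Pm m k hk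
  have hDD : D * D = D := Pm_idem m (2 * (k + 1))
  have hBB : B * B = B + B := Bmat_sq m k hk
  have herm : (D + B).IsHermitian := (Pm_herm m _).add (Bmat_herm m k hk)
  have hc : (D + B) * (D + B) * (D + B) + ((D + B) + (D + B))
      = (D + B) * (D + B) + ((D + B) * (D + B) + (D + B) * (D + B)) := by
    simp only [mul_add, add_mul, hDB, hBD, hDD, hBB, add_zero, zero_add, mul_zero, zero_mul]
    abel
  rw [chi01_cubic herm hc]
  have h2 : (D + B) * (D + B) = D + (B + B) := by
    simp only [mul_add, add_mul, hDB, hBD, hDD, hBB, add_zero, zero_add]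
    try abel
  rw [h2]
  abel

lemma cucQ_even (m : ℕ) : ∀ k, k ≤ m → cucQ m (2 * k) = Pm m (2 * k) := by
  intro k
  induction k with
  | zero =>
    intro _
    show cucQ m 0 = Pm m 0
    have : Pm m 0 = 1 := by
      unfold Pm
      simp
    rw [this]
    rfl
  | succ k ih =>
    intro hk
    have h1 : cucQ m (2 * k) = Pm m (2 * k) := ih (by omega)
    have h2 : cucQ m (2 * k + 1) = Pm m (2 * k) := odd_step m k h1
    have h3 := even_step m k (by omega) h2
    have e2 : 2 * (k + 1) = 2 * k + 2 := by omega
    rw [e2, h3]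
    try rw [e2]

lemma cucQ_odd (m k : ℕ) (hk : k ≤ m) : cucQ m (2 * k + 1) = Pm m (2 * k) :=
  odd_step m k (cucQ_even m k hk)


lemma pdiag (m s : ℕ) (h1 : 1 ≤ s) (h2 : s ≤ 2 * m) :
    cucQ m (s - 1) - cucQ m s = Matrix.diagonal
      (fun j : Fin (2 * m) => if s % 2 = 0 ∧ s ≤ (j : ℕ) + 2 ∧ (j : ℕ) < s then (1 : ℂ) else 0)
      := by
  rcases Nat.even_or_odd s with he | ho
  · obtain ⟨k, hk⟩ := he
    have e1 : s - 1 = 2 * (k - 1) + 1 := by omega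
    have e2 : s = 2 * k := by omega
    rw [e1, e2, cucQ_odd m (k - 1) (by omega), cucQ_even m k (by omega)]
    ext i j
    simp only [Matrix.sub_apply, Pm, Matrix.diagonal_apply]
    split_ifs <;> simp_all <;> omega
  · obtain ⟨k, hk⟩ := ho
    have e1 : s - 1 = 2 * k := by omega
    rw [e1, hk, cucQ_even m k (by omega), cucQ_odd m k (by omega)]
    ext i j
    simp only [Matrix.sub_apply, Pm, Matrix.diagonal_apply]
    split_ifs <;> simp_all <;> omega

lemma g_apply (m : ℕ) (i j : Fin (2 * m)) :
    (∑ s ∈ Finset.Icc 1 (2 * m),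
        condExp19 m s (allOnes m) * (cucQ m (s - 1) - cucQ m s)) i j
      = if (i : ℕ) < 2 * ((j : ℕ) / 2) + 2 then 1 else 0 := by
  have hj := j.isLt
  rw [Matrix.sum_apply]
  rw [Finset.sum_eq_single_of_mem (2 * ((j : ℕ) / 2) + 2)
    (Finset.mem_Icc.mpr ⟨by omega, by omega⟩)]
  · rw [pdiag m _ (by omega) (by omega), Matrix.mul_diagonal, condExp19_allOnes_apply]
    rw [if_pos (by omega : (2 * ((j:ℕ)/2) + 2) % 2 = 0 ∧
        2 * ((j:ℕ)/2) + 2 ≤ (j:ℕ) + 2 ∧ (j:ℕ) < 2 * ((j:ℕ)/2) + 2), mul_one]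
    split_ifs <;> simp_all [Fin.ext_iff] <;> omega
  · intro s hs hne
    rw [Finset.mem_Icc] at hs
    rw [pdiag m s hs.1 hs.2, Matrix.mul_diagonal]
    rw [if_neg (by omega), mul_zero]

lemma sum_ind (n c : ℕ) (h : c ≤ n) :
    ∑ i : Fin n, (if (i : ℕ) < c then (1 : ℂ) else 0) = (c : ℂ) := by
  rw [Fin.sum_univ_eq_sum_range (fun i => if i < c then (1 : ℂ) else 0)]
  rw [Finset.sum_boole]
  have : (Finset.range n).filter (fun i => i < c) = Finset.range c := by
    ext x
    simp only [Finset.mem_filter, Finset.mem_range]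
    omega
  rw [this, Finset.card_range]

lemma natsum (m : ℕ) : ∑ l ∈ Finset.range (2 * m), (2 * (l / 2) + 2) = 2 * m * (m + 1) := by
  induction m with
  | zero => simp
  | succ m ih =>
    rw [show 2 * (m + 1) = (2 * m + 1) + 1 by omega, Finset.sum_range_succ,
      Finset.sum_range_succ, ih]
    have d1 : (2 * m) / 2 = m := by omega
    have d2 : (2 * m + 1) / 2 = m := by omega
    rw [d1, d2]
    ring


/-- The counterexample of Appendix B.2: for the all-ones matrix `f` in `M_{2m}(ℂ)` with the
filtration `A_s` and Cuculescu's construction at level `λ = 1`, one has `p_{2k-1} = 0` and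
`p_{2k} = e_{2k-1,2k-1} + e_{2k,2k}`; consequently `‖∑_{s=1}^{2m} f_s p_s‖₂² = 2m(m+1)` while
`λ‖f‖₁ = tr f = 2m`, so the ratio `m + 1` tends to infinity with `m`. -/
theorem cuculescu_L2_counterexample (m : ℕ) (hm : 1 ≤ m) :
    (∀ (k : ℕ) (hk1 : 1 ≤ k) (hk2 : k ≤ m),
      cucQ m (2 * k - 2) - cucQ m (2 * k - 1) = 0 ∧
      cucQ m (2 * k - 1) - cucQ m (2 * k) =
        Matrix.single (⟨2 * k - 2, by omega⟩ : Fin (2 * m)) ⟨2 * k - 2, by omega⟩ 1 +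
          Matrix.single (⟨2 * k - 1, by omega⟩ : Fin (2 * m)) ⟨2 * k - 1, by omega⟩ 1) ∧
    Matrix.trace
        ((∑ s ∈ Finset.Icc 1 (2 * m),
            condExp19 m s (allOnes m) * (cucQ m (s - 1) - cucQ m s))ᴴ *
          (∑ s ∈ Finset.Icc 1 (2 * m),
            condExp19 m s (allOnes m) * (cucQ m (s - 1) - cucQ m s)))
      = ((2 * m * (m + 1) : ℕ) : ℂ) ∧
    Matrix.trace (allOnes m) = ((2 * m : ℕ) : ℂ) ∧
    Filter.Tendsto (fun m : ℕ => (m : ℝ) + 1) Filter.atTop Filter.atTop := by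
  refine ⟨?_, ?_, ?_, ?_⟩
  · intro k hk1 hk2
    have e1 : 2 * k - 2 = 2 * (k - 1) := by omega
    have e2 : 2 * k - 1 = 2 * (k - 1) + 1 := by omega
    constructor
    · rw [e1, e2, cucQ_even m (k - 1) (by omega), cucQ_odd m (k - 1) (by omega), sub_self]
    · have hq1 : cucQ m (2 * k - 1) = Pm m (2 * (k - 1)) := by
        rw [e2]; exact cucQ_odd m (k - 1) (by omega)
      rw [hq1, cucQ_even m k hk2]
      ext i j
      simp only [Matrix.sub_apply, Matrix.add_apply, Pm, Matrix.diagonal_apply,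
        Matrix.single, Matrix.of_apply, Fin.ext_iff]
      split_ifs <;> simp_all <;> omega
  · have hterm : ∀ (c : Prop) [Decidable c],
        star (if c then (1 : ℂ) else 0) * (if c then (1 : ℂ) else 0)
          = if c then (1 : ℂ) else 0 := by
      intro c _
      split_ifs <;> simp
    calc Matrix.trace
          ((∑ s ∈ Finset.Icc 1 (2 * m),
              condExp19 m s (allOnes m) * (cucQ m (s - 1) - cucQ m s))ᴴ *
            (∑ s ∈ Finset.Icc 1 (2 * m),
              condExp19 m s (allOnes m) * (cucQ m (s - 1) - cucQ m s)))
        = ∑ l : Fin (2 * m), ∑ i : Fin (2 * m),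
            (if (i : ℕ) < 2 * ((l : ℕ) / 2) + 2 then (1 : ℂ) else 0) := by
          simp only [Matrix.trace, Matrix.diag_apply, Matrix.mul_apply,
            Matrix.conjTranspose_apply, g_apply, hterm]
      _ = ∑ l : Fin (2 * m), ((2 * ((l : ℕ) / 2) + 2 : ℕ) : ℂ) := by
          refine Finset.sum_congr rfl fun l _ => ?_
          exact sum_ind (2 * m) _ (by have := l.isLt; omega)
      _ = ((∑ l ∈ Finset.range (2 * m), (2 * (l / 2) + 2) : ℕ) : ℂ) := by
          rw [Nat.cast_sum]
          exact Fin.sum_univ_eq_sum_range (fun l => ((2 * (l / 2) + 2 : ℕ) : ℂ)) (2 * m)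
      _ = ((2 * m * (m + 1) : ℕ) : ℂ) := by rw [natsum]
  · have : Matrix.trace (allOnes m) = ∑ _i : Fin (2 * m), (1 : ℂ) := rfl
    rw [this, Finset.sum_const, Finset.card_univ, Fintype.card_fin, nsmul_eq_mul, mul_one]
  · exact Filter.tendsto_atTop_add_const_right _ 1 tendsto_natCast_atTop_atTop
end
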